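/- arXiv:2209.11924 — 5 statements merged into one kernel-verified Lean document; each statement's English description precedes it below -/
import Mathlib

section
/- Let d, n, p ≥ 1 and let Z ⊆ ℝ^d have nonempty interior. Let g(z) = G φ_p(z) where G ∈ ℝ^{n×M_{d,p}} has full column rank, let h(z̃) = H φ_p(z̃) for some H ∈ ℝ^{n×M_{d,p}}, and let f : ℝ^n → ℝ^d be any map such that h(f(x)) = x for every x ∈ g(Z) and such that f(g(Z)) has nonempty interior in ℝ^d. Then there exist an invertible matrix A ∈ ℝ^{d×d} and a vector c ∈ ℝ^d such that f(g(z)) = A z + c for all z ∈ Z. -/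
set_option maxRecDepth 4000
set_option maxHeartbeats 1000000


/-- The finite set of multi-indices `m : Fin d → ℕ` (encoded with values in `Fin (p+1)`)
with total degree `∑ k, m k ≤ p`. -/
abbrev MultiIdx (d p : ℕ) : Type := {m : Fin d → Fin (p + 1) // ∑ k, (m k : ℕ) ≤ p}

/-- The monomial feature map `φ_p(z)_m = ∏ k, z k ^ (m k)`. -/
noncomputable def phi (d p : ℕ) (z : Fin d → ℝ) : MultiIdx d p → ℝ :=
  fun m => ∏ k, z k ^ (m.1 k : ℕ)

section Aux

open MvPolynomial

variable {d p : ℕ}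

/-- The multi-index `e k` (degree 1 at `k`). -/
def eIdx (d p : ℕ) (hp : 1 ≤ p) (k : Fin d) : MultiIdx d p :=
  ⟨fun j => if j = k then ⟨1, by omega⟩ else 0, by
    have h : ∀ j, (((if j = k then (⟨1, by omega⟩ : Fin (p + 1)) else 0) : Fin (p + 1)) : ℕ)
        = if j = k then 1 else 0 := fun j => by split <;> rfl
    simp only [h, Finset.sum_ite_eq' Finset.univ k (fun _ => 1), Finset.mem_univ, if_true]
    exact hp⟩

/-- The multi-index `t k` (degree `p` at `k`). -/
def tIdx (d p : ℕ) (k : Fin d) : MultiIdx d p :=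
  ⟨fun j => if j = k then ⟨p, Nat.lt_succ_self p⟩ else 0, by
    have h : ∀ j, (((if j = k then (⟨p, Nat.lt_succ_self p⟩ : Fin (p + 1)) else 0) : Fin (p + 1)) : ℕ)
        = if j = k then p else 0 := fun j => by split <;> rfl
    simp only [h, Finset.sum_ite_eq' Finset.univ k (fun _ => p), Finset.mem_univ, if_true]
    exact le_rfl⟩

lemma phi_eIdx (hp : 1 ≤ p) (z : Fin d → ℝ) (k : Fin d) : phi d p z (eIdx d p hp k) = z k := by
  unfold phi eIdx
  rw [Finset.prod_eq_single k]
  · simp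
  · intro j _ hj
    simp [hj]
  · intro h; exact absurd (Finset.mem_univ k) h

lemma phi_tIdx (z : Fin d → ℝ) (k : Fin d) : phi d p z (tIdx d p k) = z k ^ p := by
  unfold phi tIdx
  rw [Finset.prod_eq_single k]
  · simp
  · intro j _ hj
    simp [hj]
  · intro h; exact absurd (Finset.mem_univ k) h

/-- The monomial `Φ_m` as a polynomial. -/
noncomputable def phiPoly (d p : ℕ) (m : MultiIdx d p) : MvPolynomial (Fin d) ℝ :=
  ∏ k, (X k : MvPolynomial (Fin d) ℝ) ^ (m.1 k : ℕ)

lemma eval_phiPoly (z : Fin d → ℝ) (m : MultiIdx d p) :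
    eval z (phiPoly d p m) = phi d p z m := by
  simp [phiPoly, phi]

/-- Evaluating the restriction of a multivariate polynomial to a line. -/
lemma eval_line (v w : Fin d → ℝ) (Q : MvPolynomial (Fin d) ℝ) (t : ℝ) :
    Polynomial.eval t
        (aeval (fun k => Polynomial.C (w k) + Polynomial.C (v k) * Polynomial.X) Q)
      = eval (fun k => w k + v k * t) Q := by
  induction Q using MvPolynomial.induction_on with
  | C c => simp
  | add q r hq hr => simp [hq, hr]
  | mul_X q i hq => simp [hq]

end Aux

/-- **affine identification with polynomial decoders.**
If the latent support `Z` has nonempty interior, the true decoder `g(z) = G φ_p(z)` has a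
full-column-rank coefficient matrix, the learned decoder is `h(z̃) = H φ_p(z̃)`, the
encoder `f` satisfies the reconstruction identity `h (f x) = x` on `g(Z)`, and `f(g(Z))`
has nonempty interior, then `f ∘ g` is an invertible affine map on `Z`:
`f (g z) = A z + c` with `A` invertible. -/
theorem affine_identification
    (d n p : ℕ) (hd : 1 ≤ d) (hn : 1 ≤ n) (hp : 1 ≤ p)
    (Z : Set (Fin d → ℝ)) (hZ : (interior Z).Nonempty)
    (G H : Matrix (Fin n) (MultiIdx d p) ℝ)
    (hG : Function.Injective G.mulVec)
    (f : (Fin n → ℝ) → (Fin d → ℝ))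
    (hrec : ∀ x ∈ (fun z => G.mulVec (phi d p z)) '' Z, H.mulVec (phi d p (f x)) = x)
    (himg : (interior (f '' ((fun z => G.mulVec (phi d p z)) '' Z))).Nonempty) :
    ∃ (A : Matrix (Fin d) (Fin d) ℝ) (c : Fin d → ℝ), IsUnit A ∧
      ∀ z ∈ Z, f (G.mulVec (phi d p z)) = A.mulVec z + c := by
  classical
  set g : (Fin d → ℝ) → (Fin n → ℝ) := fun z => G.mulVec (phi d p z) with hgdef
  set q : (Fin d → ℝ) → (Fin d → ℝ) := fun z => f (g z) with hqdef
  -- left inverse of G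
  obtain ⟨ℓ, hℓ⟩ := LinearMap.exists_leftInverse_of_injective (Matrix.mulVecLin G)
    (LinearMap.ker_eq_bot.mpr (by exact hG))
  have hlG : ∀ v, ℓ (G.mulVec v) = v := fun v => by
    have := LinearMap.congr_fun hℓ v
    simpa [Matrix.mulVecLin_apply] using this
  set T : (MultiIdx d p → ℝ) →ₗ[ℝ] (MultiIdx d p → ℝ) := ℓ.comp (Matrix.mulVecLin H) with hTdef
  set Mm : Matrix (MultiIdx d p) (MultiIdx d p) ℝ := LinearMap.toMatrix' T with hMdef
  have hTu : ∀ u, Mm.mulVec u = T u := fun u => by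
    rw [← Matrix.toLin'_apply, hMdef, Matrix.toLin'_toMatrix']
  -- the polynomials
  set R : MultiIdx d p → MvPolynomial (Fin d) ℝ :=
    fun mm => ∑ m : MultiIdx d p, MvPolynomial.C (Mm mm m) * phiPoly d p m with hRdef
  have hevalR : ∀ mm a, MvPolynomial.eval a (R mm) = T (phi d p a) mm := by
    intro mm a
    rw [← hTu]
    simp only [hRdef, map_sum, map_mul, MvPolynomial.eval_C, eval_phiPoly]
    simp [Matrix.mulVec, dotProduct]
  -- key identity on the image
  have himage : ∀ z ∈ Z, ∀ mm, MvPolynomial.eval (q z) (R mm) = phi d p z mm := by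
    intro z hz mm
    rw [hevalR]
    have h1 : H.mulVec (phi d p (f (g z))) = g z := hrec (g z) ⟨z, hz, rfl⟩
    have : T (phi d p (q z)) = ℓ (H.mulVec (phi d p (q z))) := by
      simp [hTdef, Matrix.mulVecLin_apply]
    rw [this, hqdef]
    simp only [hgdef] at h1 ⊢
    rw [h1, hlG]
  -- vanishing of the key polynomial everywhere
  have hQ : ∀ (k : Fin d) (a : Fin d → ℝ),
      MvPolynomial.eval a ((R (eIdx d p hp k)) ^ p - R (tIdx d p k)) = 0 := by
    intro k
    obtain ⟨a₀, ha₀⟩ := himg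
    have hvan : ∀ a ∈ interior (f '' (g '' Z)),
        MvPolynomial.eval a ((R (eIdx d p hp k)) ^ p - R (tIdx d p k)) = 0 := by
      intro a ha
      obtain ⟨x, ⟨z, hz, rfl⟩, rfl⟩ := interior_subset ha
      have h1 := himage z hz (eIdx d p hp k)
      have h2 := himage z hz (tIdx d p k)
      simp only [map_sub, map_pow]
      rw [h1, h2, phi_eIdx, phi_tIdx, sub_self]
    have hana : AnalyticOnNhd ℝ
        (fun a => MvPolynomial.eval a ((R (eIdx d p hp k)) ^ p - R (tIdx d p k))) Set.univ :=
      AnalyticOnNhd.eval_mvPolynomial _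
    have hev : (fun a => MvPolynomial.eval a ((R (eIdx d p hp k)) ^ p - R (tIdx d p k)))
        =ᶠ[nhds a₀] 0 :=
      Filter.eventuallyEq_of_mem (isOpen_interior.mem_nhds ha₀) hvan
    have := hana.eqOn_zero_of_preconnected_of_eventuallyEq_zero
      isPreconnected_univ (Set.mem_univ a₀) hev
    intro a
    exact this (Set.mem_univ a)
  -- line restrictions
  set rv : (Fin d → ℝ) → (Fin d → ℝ) :=
    fun a k => MvPolynomial.eval a (R (eIdx d p hp k)) with hrvdef
  have hline : ∀ v w : Fin d → ℝ, ∃ α β : Fin d → ℝ, ∀ t : ℝ,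
      rv (w + t • v) = α + t • β := by
    intro v w
    set ρ : MvPolynomial (Fin d) ℝ →ₐ[ℝ] Polynomial ℝ :=
      MvPolynomial.aeval (fun k => Polynomial.C (w k) + Polynomial.C (v k) * Polynomial.X)
      with hρdef
    -- degree bound on images of the `R` polynomials
    have hdeg : ∀ mm : MultiIdx d p, (ρ (R mm)).natDegree ≤ p := by
      intro mm
      rw [hRdef]
      simp only [map_sum, map_mul]
      apply Polynomial.natDegree_sum_le_of_forall_le
      intro m _
      refine le_trans (Polynomial.natDegree_mul_le) ?_
      have hC : ρ (MvPolynomial.C (Mm mm m)) = Polynomial.C (Mm mm m) := by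
        simp [hρdef, MvPolynomial.aeval_C]
      rw [hC, Polynomial.natDegree_C, zero_add]
      have : ρ (phiPoly d p m)
          = ∏ k, (Polynomial.C (w k) + Polynomial.C (v k) * Polynomial.X) ^ (m.1 k : ℕ) := by
        simp [hρdef, phiPoly, map_prod, map_pow]
      rw [this]
      refine le_trans (Polynomial.natDegree_prod_le _ _) ?_
      refine le_trans (Finset.sum_le_sum (fun k _ => ?_)) m.2
      have hb : (Polynomial.C (w k) + Polynomial.C (v k) * Polynomial.X).natDegree ≤ 1 := by
        refine le_trans (Polynomial.natDegree_add_le _ _) ?_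
        simp only [Polynomial.natDegree_C, max_le_iff]
        exact ⟨Nat.zero_le _, le_trans (Polynomial.natDegree_C_mul_le _ _)
          Polynomial.natDegree_X_le⟩
      refine le_trans Polynomial.natDegree_pow_le ?_
      calc (m.1 k : ℕ) * (Polynomial.C (w k) + Polynomial.C (v k) * Polynomial.X).natDegree
          ≤ (m.1 k : ℕ) * 1 := Nat.mul_le_mul_left _ hb
        _ = (m.1 k : ℕ) := Nat.mul_one _
    -- the one-variable polynomial identity
    have hpow : ∀ k : Fin d, (ρ (R (eIdx d p hp k))) ^ p = ρ (R (tIdx d p k)) := by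
      intro k
      apply Polynomial.funext
      intro t
      have h0 := hQ k (fun j => w j + v j * t)
      rw [map_sub, map_pow, sub_eq_zero] at h0
      rw [← map_pow, hρdef]
      calc Polynomial.eval t ((MvPolynomial.aeval
            (fun k => Polynomial.C (w k) + Polynomial.C (v k) * Polynomial.X))
              ((R (eIdx d p hp k)) ^ p))
          = MvPolynomial.eval (fun j => w j + v j * t) ((R (eIdx d p hp k)) ^ p) :=
            eval_line v w _ t
        _ = (MvPolynomial.eval (fun j => w j + v j * t) (R (eIdx d p hp k))) ^ p :=
            map_pow _ _ _
        _ = MvPolynomial.eval (fun j => w j + v j * t) (R (tIdx d p k)) := h0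
        _ = Polynomial.eval t ((MvPolynomial.aeval
            (fun k => Polynomial.C (w k) + Polynomial.C (v k) * Polynomial.X))
              (R (tIdx d p k))) := (eval_line v w _ t).symm
    have hdeg1 : ∀ k : Fin d, (ρ (R (eIdx d p hp k))).natDegree ≤ 1 := by
      intro k
      have h1 : p * (ρ (R (eIdx d p hp k))).natDegree ≤ p * 1 := by
        rw [← Polynomial.natDegree_pow, hpow k]
        simpa using hdeg (tIdx d p k)
      exact Nat.le_of_mul_le_mul_left h1 (by omega)
    refine ⟨fun k => (ρ (R (eIdx d p hp k))).coeff 0,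
      fun k => (ρ (R (eIdx d p hp k))).coeff 1, fun t => ?_⟩
    funext k
    have h2 := Polynomial.eq_X_add_C_of_natDegree_le_one (hdeg1 k)
    have h3 : rv (w + t • v) k
        = Polynomial.eval t (ρ (R (eIdx d p hp k))) := by
      have hpt : (w + t • v) = fun j => w j + v j * t := by
        funext j; simp [mul_comm]
      show MvPolynomial.eval (w + t • v) (R (eIdx d p hp k)) = _
      rw [hpt, hρdef, eval_line]
    rw [h3]
    conv_lhs => rw [h2]
    simp only [Polynomial.eval_add, Polynomial.eval_mul, Polynomial.eval_C, Polynomial.eval_X,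
      Pi.add_apply, Pi.smul_apply, smul_eq_mul]
    ring
  -- derive global affine structure of rv
  have hhom : ∀ (t : ℝ) (x : Fin d → ℝ), rv (t • x) = rv 0 + t • (rv x - rv 0) := by
    intro t x
    obtain ⟨α, β, h⟩ := hline x 0
    have h0 := h 0
    have h1 := h 1
    have ht := h t
    rw [zero_smul, add_zero, zero_smul, add_zero] at h0
    simp only [one_smul] at h1
    rw [zero_add] at h1 ht
    have hβ : β = rv x - rv 0 := by
      rw [h1, ← h0]
      funext k
      simp only [Pi.add_apply, Pi.sub_apply]
      ring
    rw [ht, ← h0, hβ]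
  have hadd : ∀ x y : Fin d → ℝ, rv (x + y) = rv x + rv y - rv 0 := by
    intro x y
    obtain ⟨α, β, h⟩ := hline (y - x) x
    have h0 := h 0
    have hhalf := h (1 / 2)
    rw [zero_smul, add_zero, zero_smul, add_zero] at h0
    have hmid : x + (1 / 2 : ℝ) • (y - x) = (1 / 2 : ℝ) • (x + y) := by
      funext j
      simp [Pi.smul_apply, smul_eq_mul]
      ring
    rw [hmid] at hhalf
    have hh := hhom (1 / 2 : ℝ) (x + y)
    rw [hh] at hhalf
    -- hhalf : rv 0 + (1/2) • (rv (x+y) - rv 0) = α + (1/2) • β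
    funext k
    have e1 := congrFun hhalf k
    have e0 := congrFun h0 k
    have h1 := h 1
    rw [one_smul] at h1
    have e2 := congrFun h1 k
    have hx1 : x + (y - x) = y := by
      funext j
      simp only [Pi.add_apply, Pi.sub_apply]
      ring
    rw [hx1] at e2
    simp only [Pi.add_apply, Pi.sub_apply, Pi.smul_apply, smul_eq_mul] at e1 e0 e2 ⊢
    linarith
  -- the linear map
  set L : (Fin d → ℝ) →ₗ[ℝ] (Fin d → ℝ) :=
    { toFun := fun x => rv x - rv 0
      map_add' := by
        intro x y
        show rv (x + y) - rv 0 = (rv x - rv 0) + (rv y - rv 0)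
        rw [hadd x y]
        funext k
        simp only [Pi.add_apply, Pi.sub_apply]
        ring
      map_smul' := by
        intro t x
        show rv (t • x) - rv 0 = t • (rv x - rv 0)
        rw [hhom t x]
        funext k
        simp only [RingHom.id_apply, Pi.add_apply, Pi.sub_apply, Pi.smul_apply, smul_eq_mul]
        ring } with hLdef
  have hLapp : ∀ x, L x = rv x - rv 0 := fun x => rfl
  have hz_eq : ∀ z ∈ Z, L (q z) = z - rv 0 := by
    intro z hz
    rw [hLapp]
    have : rv (q z) = z := by
      funext k
      show MvPolynomial.eval (q z) (R (eIdx d p hp k)) = z k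
      rw [himage z hz (eIdx d p hp k), phi_eIdx]
    rw [this]
  -- surjectivity
  haveI hNe : Filter.NeBot (nhdsWithin (0 : ℝ) {x : ℝ | IsUnit x}) := by
    have hset : {x : ℝ | IsUnit x} = {(0 : ℝ)}ᶜ := by
      ext x; simp [isUnit_iff_ne_zero]
    rw [hset]
    exact NormedField.nhdsNE_neBot 0
  have hsub : ((fun z => z - rv 0) '' interior Z) ⊆ (LinearMap.range L : Set (Fin d → ℝ)) := by
    rintro _ ⟨z, hz, rfl⟩
    exact ⟨q z, hz_eq z (interior_subset hz)⟩
  have hopen : IsOpen ((fun z => z - rv 0) '' interior Z) := by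
    have : (fun z : Fin d → ℝ => z - rv 0) = fun z => z + (-(rv 0)) := by
      funext z; rw [sub_eq_add_neg]
    rw [this]
    exact (Homeomorph.addRight (-(rv 0))).isOpen_image.mpr isOpen_interior
  have hrange : LinearMap.range L = ⊤ := by
    apply Submodule.eq_top_of_nonempty_interior'
    obtain ⟨z₀, hz₀⟩ := hZ
    exact ⟨z₀ - rv 0, interior_maximal hsub hopen ⟨z₀, hz₀, rfl⟩⟩
  have hsurj : Function.Surjective L := LinearMap.range_eq_top.mp hrange
  have hinj : Function.Injective L := by
    rw [← LinearMap.ker_eq_bot]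
    exact LinearMap.injective_iff_surjective.mpr hsurj |> LinearMap.ker_eq_bot.mpr
  have hbij : Function.Bijective L := ⟨hinj, hsurj⟩
  set e : (Fin d → ℝ) ≃ₗ[ℝ] (Fin d → ℝ) := LinearEquiv.ofBijective L hbij with hedef
  set A : Matrix (Fin d) (Fin d) ℝ := LinearMap.toMatrix' (e.symm : (Fin d → ℝ) →ₗ[ℝ] (Fin d → ℝ))
    with hAdef
  set B : Matrix (Fin d) (Fin d) ℝ := LinearMap.toMatrix' (e : (Fin d → ℝ) →ₗ[ℝ] (Fin d → ℝ))
    with hBdef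
  have hAB : A * B = 1 := by
    rw [hAdef, hBdef, ← LinearMap.toMatrix'_comp, ← LinearMap.toMatrix'_id]
    congr 1
    apply LinearMap.ext
    intro x
    simp
  have hBA : B * A = 1 := by
    rw [hAdef, hBdef, ← LinearMap.toMatrix'_comp, ← LinearMap.toMatrix'_id]
    congr 1
    apply LinearMap.ext
    intro x
    simp
  refine ⟨A, -(e.symm (rv 0)), ⟨⟨A, B, hAB, hBA⟩, rfl⟩, ?_⟩
  intro z hz
  have h1 : e (q z) = z - rv 0 := hz_eq z hz
  have h2 : q z = e.symm (z - rv 0) := by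
    rw [← h1, LinearEquiv.symm_apply_apply]
  have h3 : A.mulVec z = e.symm z := by
    rw [← Matrix.toLin'_apply, hAdef, Matrix.toLin'_toMatrix']
    rfl
  show q z = A.mulVec z + -(e.symm (rv 0))
  rw [h2, h3, map_sub]
  rfl
end

section
/- Let d, n, p ≥ 1 and let Z, Z^{(i)} ⊆ ℝ^d with Z ∪ Z^{(i)} having nonempty interior. Assume: (a) for every coordinate r, the projection Z^{(i)}_r is bounded, with infimum α_inf^r and supremum α_sup^r, and there exists ζ > 0 such that the boundary strips B_r = (α_inf^r, α_inf^r + ζ) ∪ (α_sup^r − ζ, α_sup^r) satisfy B_r ⊆ Z^{(i)}_r and ∏_{r=1}^d B_r ⊆ Z^{(i)}; and (b) for two fixed distinct indices i, j, the support independence Z^{(i)}_{i,j} = Z^{(i)}_i × Z^{(i)}_j holds. Let g(z) = G φ_p(z) with G ∈ ℝ^{n×M_{d,p}} of full column rank, h(z̃) = H φ_p(z̃) with H ∈ ℝ^{n×M_{d,p}}, and let f : ℝ^n → ℝ^d satisfy h(f(x)) = x for all x ∈ g(Z ∪ Z^{(i)}), with f(g(Z ∪ Z^{(i)})) having nonempty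 interior. Suppose the encoder output support Ẑ^{(i)} = f(g(Z^{(i)})) satisfies Ẑ^{(i)}_{i,j} = Ẑ^{(i)}_i × Ẑ^{(i)}_j. Then f(g(z)) = A z + c on Z ∪ Z^{(i)} for some invertible A ∈ ℝ^{d×d} and c ∈ ℝ^d, where the i-th and j-th rows a_i, a_j of A are each nonzero and there is no column in which both a_i and a_j have a nonzero entry. -/
/-- Projection of a set `W ⊆ ℝ^d` onto coordinate `r`. -/
def proj {d : ℕ} (r : Fin d) (W : Set (Fin d → ℝ)) : Set ℝ :=
  (fun z => z r) '' W

/-- Projection of a set `W ⊆ ℝ^d` onto the coordinate pair `(r, s)`. -/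
def proj2 {d : ℕ} (r s : Fin d) (W : Set (Fin d → ℝ)) : Set (ℝ × ℝ) :=
  (fun z => (z r, z s)) '' W


namespace PBAI

open Polynomial

noncomputable section

variable {d p : ℕ}


/-- total degree of a multi-index -/
def degIdx (m : MultiIdx d p) : ℕ := ∑ k, (m.1 k : ℕ)

lemma degIdx_le (m : MultiIdx d p) : degIdx m ≤ p := m.2

def zeroIdx (d p : ℕ) : MultiIdx d p := ⟨fun _ => 0, by simp⟩

lemma phi_zeroIdx (z : Fin d → ℝ) : phi d p z (zeroIdx d p) = 1 := by
  simp [phi, zeroIdx]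

lemma degIdx_zeroIdx : degIdx (zeroIdx d p) = 0 := by simp [degIdx, zeroIdx]

def eIdx (hp : 1 ≤ p) (k : Fin d) : MultiIdx d p :=
  ⟨fun r => if r = k then (⟨1, by omega⟩ : Fin (p + 1)) else 0, by
    have h : ∀ r : Fin d,
        (((if r = k then (⟨1, by omega⟩ : Fin (p + 1)) else 0) : Fin (p + 1)) : ℕ)
        = if r = k then 1 else 0 := fun r => by split <;> rfl
    simp only [h, Finset.sum_ite_eq', Finset.mem_univ, if_true]
    exact hp⟩

lemma eIdx_apply_val (hp : 1 ≤ p) (k r : Fin d) :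
    ((eIdx hp k).1 r : ℕ) = if r = k then 1 else 0 := by
  simp only [eIdx]; split <;> rfl

lemma degIdx_eIdx (hp : 1 ≤ p) (k : Fin d) : degIdx (eIdx hp k) = 1 := by
  simp [degIdx, eIdx_apply_val hp]

lemma phi_eIdx (hp : 1 ≤ p) (z : Fin d → ℝ) (k : Fin d) : phi d p z (eIdx hp k) = z k := by
  unfold phi
  have h : ∀ r : Fin d, z r ^ ((eIdx hp k).1 r : ℕ) = if r = k then z r else 1 := by
    intro r; rw [eIdx_apply_val hp]; split <;> simp
  simp only [h, Finset.prod_ite_eq', Finset.mem_univ, if_true]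

def topIdx (k : Fin d) : MultiIdx d p :=
  ⟨fun r => if r = k then (⟨p, Nat.lt_succ_self p⟩ : Fin (p + 1)) else 0, by
    have h : ∀ r : Fin d,
        (((if r = k then (⟨p, Nat.lt_succ_self p⟩ : Fin (p + 1)) else 0) : Fin (p + 1)) : ℕ)
        = if r = k then p else 0 := fun r => by split <;> rfl
    simp only [h, Finset.sum_ite_eq', Finset.mem_univ, if_true]
    exact le_rfl⟩

lemma phi_topIdx (z : Fin d → ℝ) (k : Fin d) : phi d p z (topIdx k) = z k ^ p := by
  unfold phi
  have h : ∀ r : Fin d, z r ^ (((topIdx k : MultiIdx d p)).1 r : ℕ)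
      = if r = k then z r ^ p else 1 := by
    intro r
    have : (((topIdx k : MultiIdx d p)).1 r : ℕ) = if r = k then p else 0 := by
      simp only [topIdx]; split <;> rfl
    rw [this]; split <;> simp
  simp only [h, Finset.prod_ite_eq', Finset.mem_univ, if_true]

lemma eIdx_injective (hp : 1 ≤ p) : Function.Injective (eIdx (d := d) hp) := by
  intro a b hab
  have h := congrArg (fun m : MultiIdx d p => (m.1 a : ℕ)) hab
  simp only [eIdx_apply_val hp, if_pos rfl] at h
  by_cases hab : a = b
  · exact hab
  · simp [hab] at h

lemma degIdx_eq_zero_iff {m : MultiIdx d p} : degIdx m = 0 ↔ m = zeroIdx d p := by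
  constructor
  · intro h
    apply Subtype.ext; funext k
    have hk : (m.1 k : ℕ) = 0 := by
      have := Finset.sum_eq_zero_iff.mp h k (Finset.mem_univ k)
      exact this
    exact Fin.ext hk
  · rintro rfl; exact degIdx_zeroIdx

lemma eq_eIdx_of_degIdx_eq_one (hp : 1 ≤ p) {m : MultiIdx d p} (hm : degIdx m = 1) :
    ∃ r, m = eIdx hp r := by
  have hne : ∑ k, (m.1 k : ℕ) ≠ 0 := by rw [show ∑ k, (m.1 k : ℕ) = degIdx m from rfl, hm]; omega
  obtain ⟨r, -, hr⟩ := Finset.exists_ne_zero_of_sum_ne_zero hne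
  refine ⟨r, Subtype.ext (funext fun s => Fin.ext ?_)⟩
  have hle : (m.1 r : ℕ) ≤ 1 := by
    calc (m.1 r : ℕ) ≤ ∑ k, (m.1 k : ℕ) :=
          Finset.single_le_sum (f := fun k => (m.1 k : ℕ)) (fun _ _ => Nat.zero_le _)
            (Finset.mem_univ r)
    _ = 1 := hm
  have hr1 : (m.1 r : ℕ) = 1 := by omega
  have hm' : ∑ k, (m.1 k : ℕ) = 1 := hm
  have hsplit : ∑ s ∈ Finset.univ.erase r, (m.1 s : ℕ) + (m.1 r : ℕ) = ∑ k, (m.1 k : ℕ) :=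
    Finset.sum_erase_add _ _ (Finset.mem_univ r)
  have hzero : ∀ s ∈ Finset.univ.erase r, (m.1 s : ℕ) = 0 := by
    intro s hs
    have hsum0 : ∑ s ∈ Finset.univ.erase r, (m.1 s : ℕ) = 0 := by omega
    exact Finset.sum_eq_zero_iff.mp hsum0 s hs
  rw [eIdx_apply_val hp]
  by_cases hsr : s = r
  · subst hsr; rw [if_pos rfl]; exact hr1
  · rw [if_neg hsr]; exact hzero s (Finset.mem_erase.mpr ⟨hsr, Finset.mem_univ s⟩)



/-- linear combination of monomials -/
def lincomb (γ : MultiIdx d p → ℝ) (z : Fin d → ℝ) : ℝ := ∑ m, γ m * phi d p z m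

/-- the polynomial `t ↦ lincomb γ (z0 + t • w)` -/
def lineP (γ : MultiIdx d p → ℝ) (z0 w : Fin d → ℝ) : ℝ[X] :=
  ∑ m : MultiIdx d p, C (γ m) * ∏ r, (C (z0 r) + C (w r) * X) ^ (m.1 r : ℕ)

lemma eval_lineP (γ : MultiIdx d p → ℝ) (z0 w : Fin d → ℝ) (t : ℝ) :
    (lineP γ z0 w).eval t = lincomb γ (z0 + t • w) := by
  unfold lineP lincomb phi
  rw [Polynomial.eval_finset_sum]
  refine Finset.sum_congr rfl fun m _ => ?_
  rw [eval_mul, eval_C, Polynomial.eval_prod]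
  congr 1
  refine Finset.prod_congr rfl fun r _ => ?_
  rw [eval_pow]
  congr 1
  simp only [eval_add, eval_mul, eval_C, eval_X, Pi.add_apply, Pi.smul_apply, smul_eq_mul]
  ring

/-- the polynomial `t ↦ lincomb γ (t • w)` -/
def rayP (γ : MultiIdx d p → ℝ) (w : Fin d → ℝ) : ℝ[X] :=
  ∑ m : MultiIdx d p, C (γ m * ∏ r, w r ^ (m.1 r : ℕ)) * X ^ degIdx m

lemma eval_rayP (γ : MultiIdx d p → ℝ) (w : Fin d → ℝ) (t : ℝ) :
    (rayP γ w).eval t = lincomb γ (t • w) := by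
  unfold rayP lincomb phi degIdx
  rw [Polynomial.eval_finset_sum]
  refine Finset.sum_congr rfl fun m _ => ?_
  simp only [eval_mul, eval_C, eval_pow, eval_X, Pi.smul_apply, smul_eq_mul, mul_pow,
    Finset.prod_mul_distrib, Finset.prod_pow_eq_pow_sum]
  ring

lemma coeff_rayP (γ : MultiIdx d p → ℝ) (w : Fin d → ℝ) (D : ℕ) :
    (rayP γ w).coeff D =
      ∑ m : MultiIdx d p, if degIdx m = D then γ m * ∏ r, w r ^ (m.1 r : ℕ) else 0 := by
  unfold rayP
  rw [Polynomial.finset_sum_coeff]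
  refine Finset.sum_congr rfl fun m _ => ?_
  rw [Polynomial.coeff_C_mul, Polynomial.coeff_X_pow]
  by_cases h : degIdx m = D
  · rw [if_pos h, if_pos h.symm, mul_one]
  · rw [if_neg h, if_neg (fun hh => h hh.symm), mul_zero]

lemma natDegree_rayP_le (γ : MultiIdx d p → ℝ) (w : Fin d → ℝ) :
    (rayP γ w).natDegree ≤ p := by
  rw [Polynomial.natDegree_le_iff_coeff_eq_zero]
  intro N hN
  rw [coeff_rayP]
  refine Finset.sum_eq_zero fun m _ => ?_
  have := degIdx_le m
  rw [if_neg (by omega)]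

/-- extension of the power identity from a ball to the whole space -/
lemma lincomb_pow_ext {c c' : MultiIdx d p → ℝ} {z0 : Fin d → ℝ} {ρ : ℝ} (hρ : 0 < ρ)
    (h : ∀ z ∈ Metric.ball z0 ρ, (lincomb c z) ^ p = lincomb c' z) (y : Fin d → ℝ) :
    (lincomb c y) ^ p = lincomb c' y := by
  set w : Fin d → ℝ := y - z0 with hw
  set δ : ℝ := ρ / (‖w‖ + 1) with hδ
  have hδpos : 0 < δ := by positivity
  have hmem : ∀ t ∈ Set.Ioo (-δ) δ, z0 + t • w ∈ Metric.ball z0 ρ := by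
    intro t ht
    rw [Metric.mem_ball, dist_eq_norm]
    have h1 : z0 + t • w - z0 = t • w := by abel
    rw [h1, norm_smul]
    have h2 : |t| < δ := abs_lt.mpr ⟨ht.1, ht.2⟩
    have h3 : ‖w‖ < ‖w‖ + 1 := by linarith
    calc ‖t‖ * ‖w‖ ≤ |t| * (‖w‖ + 1) := by
          rw [Real.norm_eq_abs]
          exact mul_le_mul_of_nonneg_left (by linarith [norm_nonneg w]) (abs_nonneg t)
    _ < δ * (‖w‖ + 1) := by
          apply mul_lt_mul_of_pos_right h2; linarith [norm_nonneg w]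
    _ = ρ := by rw [hδ]; field_simp
  have key : (lineP c z0 w) ^ p - lineP c' z0 w = 0 := by
    apply Polynomial.eq_zero_of_infinite_isRoot
    apply Set.Infinite.mono (s := Set.Ioo (-δ) δ)
    · intro t ht
      have := h _ (hmem t ht)
      simp only [Set.mem_setOf_eq, IsRoot, eval_sub, eval_pow, eval_lineP]
      rw [this, sub_self]
    · exact Set.Ioo_infinite (by linarith)
  have := congrArg (Polynomial.eval 1) key
  simp only [eval_sub, eval_pow, eval_lineP, eval_zero] at this
  have hy : z0 + (1 : ℝ) • w = y := by rw [one_smul, hw]; abel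
  rw [hy] at this
  linarith [this]

/-- the degree argument: a monomial combination whose `p`-th power is again a monomial
combination of degree at most `p` must be affine. -/
lemma lincomb_affine {c c' : MultiIdx d p → ℝ} (hp : 1 ≤ p)
    (h : ∀ z, (lincomb c z) ^ p = lincomb c' z) (w : Fin d → ℝ) :
    lincomb c w = c (zeroIdx d p) + ∑ r, c (eIdx hp r) * w r := by
  classical
  have hQR : rayP c w ^ p = rayP c' w := by
    apply Polynomial.funext; intro t
    rw [Polynomial.eval_pow, eval_rayP, eval_rayP]; exact h _
  have hdeg : (rayP c w).natDegree ≤ 1 := by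
    have h2 : p * (rayP c w).natDegree ≤ p * 1 := by
      rw [← Polynomial.natDegree_pow, hQR, mul_one]; exact natDegree_rayP_le c' w
    exact Nat.le_of_mul_le_mul_left h2 (by omega)
  have heval : lincomb c w = (rayP c w).coeff 1 + (rayP c w).coeff 0 := by
    have h1 : (rayP c w).eval 1 = lincomb c w := by rw [eval_rayP, one_smul]
    rw [← h1]
    conv_lhs => rw [Polynomial.eq_X_add_C_of_natDegree_le_one hdeg]
    simp
  have hc0 : (rayP c w).coeff 0 = c (zeroIdx d p) := by
    rw [coeff_rayP]
    have hterm : ∀ m : MultiIdx d p,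
        (if degIdx m = 0 then c m * ∏ r, w r ^ (m.1 r : ℕ) else 0)
        = if m = zeroIdx d p then c m else 0 := by
      intro m
      by_cases hm : m = zeroIdx d p
      · subst hm
        rw [if_pos degIdx_zeroIdx, if_pos rfl]
        have : ∏ r, w r ^ (((zeroIdx d p : MultiIdx d p)).1 r : ℕ) = 1 := by
          simp [zeroIdx]
        rw [this, mul_one]
      · rw [if_neg hm, if_neg (fun hh => hm (degIdx_eq_zero_iff.mp hh))]
    simp only [hterm, Finset.sum_ite_eq', Finset.mem_univ, if_true]
  have hc1 : (rayP c w).coeff 1 = ∑ r, c (eIdx hp r) * w r := by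
    rw [coeff_rayP]
    have hterm : ∀ m : MultiIdx d p,
        (if degIdx m = 1 then c m * ∏ r, w r ^ (m.1 r : ℕ) else 0)
        = ∑ r, if m = eIdx hp r then c (eIdx hp r) * w r else 0 := by
      intro m
      by_cases hm : degIdx m = 1
      · obtain ⟨r0, rfl⟩ := eq_eIdx_of_degIdx_eq_one hp hm
        rw [if_pos hm]
        have hprod : ∏ r, w r ^ (((eIdx hp r0 : MultiIdx d p)).1 r : ℕ) = w r0 :=
          phi_eIdx hp w r0
        rw [hprod]
        have hterm2 : ∀ r : Fin d,
            (if eIdx hp r0 = eIdx hp r then c (eIdx hp r) * w r else 0)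
            = if r0 = r then c (eIdx hp r) * w r else 0 := by
          intro r
          by_cases hr : r0 = r
          · subst hr; simp
          · rw [if_neg (fun hh => hr ((eIdx_injective hp) hh)), if_neg hr]
        rw [Finset.sum_congr rfl fun r _ => hterm2 r]
        rw [Finset.sum_ite_eq Finset.univ r0 (fun r => c (eIdx hp r) * w r)]
        rw [if_pos (Finset.mem_univ r0)]
      · rw [if_neg hm]
        symm
        refine Finset.sum_eq_zero fun r _ => ?_
        rw [if_neg]
        intro hh
        exact hm (hh ▸ degIdx_eIdx hp r)
    rw [Finset.sum_congr rfl fun m _ => hterm m, Finset.sum_comm]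
    refine Finset.sum_congr rfl fun r _ => ?_
    rw [Finset.sum_ite_eq' Finset.univ (eIdx hp r) (fun _ => c (eIdx hp r) * w r)]
    rw [if_pos (Finset.mem_univ _)]
  rw [heval, hc0, hc1]
  ring
end
end PBAI

set_option maxHeartbeats 1600000 in
/-- **pairwise block-affine identification under imperfect interventions.**
The interventional support `Zi` has bounded coordinate projections with `ζ`-thick boundary
strips `B r` contained coordinatewise in the projections and whose product is contained in
`Zi`, and satisfies support independence for the pair `(i, j)`.  If the full-column-rank
polynomial decoder `g`, learned polynomial decoder `h`, and encoder `f` satisfy the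
reconstruction identity on `g(Z ∪ Zi)`, `Z ∪ Zi` and `f(g(Z ∪ Zi))` have nonempty
interior, and the encoder output support `Ẑ = f(g(Zi))` also satisfies support
independence for `(i, j)`, then `f ∘ g` is affine with invertible matrix `A` whose `i`-th
and `j`-th rows are nonzero and share no commonly nonzero column. -/
theorem pairwise_block_affine_identification
    (d n p : ℕ) (hd : 1 ≤ d) (hn : 1 ≤ n) (hp : 1 ≤ p)
    (Z Zi : Set (Fin d → ℝ)) (hZ : (interior (Z ∪ Zi)).Nonempty)
    (αinf αsup : Fin d → ℝ)
    (hglb : ∀ r, IsGLB (proj r Zi) (αinf r))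
    (hlub : ∀ r, IsLUB (proj r Zi) (αsup r))
    (ζ : ℝ) (hζ : 0 < ζ)
    (B : Fin d → Set ℝ)
    (hB : ∀ r, B r =
      Set.Ioo (αinf r) (αinf r + ζ) ∪ Set.Ioo (αsup r - ζ) (αsup r))
    (hBsub : ∀ r, B r ⊆ proj r Zi)
    (hBprod : Set.univ.pi B ⊆ Zi)
    (i j : Fin d) (hij : i ≠ j)
    (hsupp : proj2 i j Zi = (proj i Zi) ×ˢ (proj j Zi))
    (G H : Matrix (Fin n) (MultiIdx d p) ℝ)
    (hG : Function.Injective G.mulVec)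
    (f : (Fin n → ℝ) → (Fin d → ℝ))
    (hrec : ∀ x ∈ (fun z => G.mulVec (phi d p z)) '' (Z ∪ Zi),
      H.mulVec (phi d p (f x)) = x)
    (himg : (interior (f '' ((fun z => G.mulVec (phi d p z)) '' (Z ∪ Zi)))).Nonempty)
    (hsupphat : proj2 i j (f '' ((fun z => G.mulVec (phi d p z)) '' Zi)) =
      (proj i (f '' ((fun z => G.mulVec (phi d p z)) '' Zi))) ×ˢ
      (proj j (f '' ((fun z => G.mulVec (phi d p z)) '' Zi)))) :
    ∃ (A : Matrix (Fin d) (Fin d) ℝ) (c : Fin d → ℝ), IsUnit A ∧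
      (∀ z ∈ Z ∪ Zi, f (G.mulVec (phi d p z)) = A.mulVec z + c) ∧
      A i ≠ 0 ∧ A j ≠ 0 ∧ ∀ col : Fin d, A i col = 0 ∨ A j col = 0 := by
  classical
  open PBAI in
  -- ===== Part 1 : the map `f ∘ g` is affine =====
  have hEx : ∃ (A : Matrix (Fin d) (Fin d) ℝ) (c : Fin d → ℝ), IsUnit A ∧
      ∀ z ∈ Z ∪ Zi, f (G.mulVec (phi d p z)) = A.mulVec z + c := by
    obtain ⟨Lmap, hL⟩ := (Matrix.mulVecLin G).exists_leftInverse_of_injective (by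
      rw [LinearMap.ker_eq_bot]
      have hcoe : ⇑(Matrix.mulVecLin G) = G.mulVec := funext fun v => Matrix.mulVecLin_apply G v
      rw [hcoe]; exact hG)
    set L : Matrix (MultiIdx d p) (Fin n) ℝ := LinearMap.toMatrix' Lmap with hLdef
    have hLG : ∀ v : MultiIdx d p → ℝ, L.mulVec (G.mulVec v) = v := by
      intro v
      have h1 : L.mulVec (G.mulVec v) = Lmap (G.mulVec v) := by
        rw [hLdef, ← Matrix.toLin'_apply, Matrix.toLin'_toMatrix']
      rw [h1, ← Matrix.mulVecLin_apply, ← LinearMap.comp_apply, hL, LinearMap.id_apply]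
    set M : Matrix (MultiIdx d p) (MultiIdx d p) ℝ := L * H with hMdef
    set a : (Fin d → ℝ) → (Fin d → ℝ) := fun z => f (G.mulVec (phi d p z)) with hadef
    have hMphi : ∀ z ∈ Z ∪ Zi, M.mulVec (phi d p (a z)) = phi d p z := by
      intro z hz
      have h1 : M.mulVec (phi d p (a z)) = L.mulVec (H.mulVec (phi d p (a z))) := by
        rw [hMdef, ← Matrix.mulVec_mulVec]
      rw [h1, hrec _ ⟨z, hz, rfl⟩, hLG]
    have hrow : ∀ (m0 : MultiIdx d p) (y : Fin d → ℝ),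
        M.mulVec (phi d p y) m0 = PBAI.lincomb (M m0) y := by
      intro m0 y; simp [Matrix.mulVec, dotProduct, PBAI.lincomb]
    have hq_inv : ∀ z ∈ Z ∪ Zi, ∀ k, PBAI.lincomb (M (PBAI.eIdx hp k)) (a z) = z k := by
      intro z hz k
      rw [← hrow, hMphi z hz, PBAI.phi_eIdx]
    obtain ⟨w0, hw0⟩ := himg
    obtain ⟨ρ, hρpos, hball⟩ := Metric.isOpen_iff.mp isOpen_interior w0 hw0
    have hball' : Metric.ball w0 ρ ⊆ f '' ((fun z => G.mulVec (phi d p z)) '' (Z ∪ Zi)) :=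
      hball.trans interior_subset
    have hpow : ∀ k : Fin d, ∀ y,
        (PBAI.lincomb (M (PBAI.eIdx hp k)) y) ^ p = PBAI.lincomb (M (PBAI.topIdx k)) y := by
      intro k
      apply PBAI.lincomb_pow_ext hρpos
      intro w hw
      obtain ⟨x, hx, hfx⟩ := hball' hw
      obtain ⟨z, hz, hgz⟩ := hx
      have hwz : w = a z := by
        simp only [hadef]; rw [← hfx]; exact congrArg f hgz.symm
      rw [hwz, ← hrow, ← hrow, hMphi z hz, PBAI.phi_eIdx, PBAI.phi_topIdx]
    set A' : Matrix (Fin d) (Fin d) ℝ := fun k r => M (PBAI.eIdx hp k) (PBAI.eIdx hp r) with hA'def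
    set cv : Fin d → ℝ := fun k => M (PBAI.eIdx hp k) (PBAI.zeroIdx d p) with hcvdef
    have haff : ∀ (y : Fin d → ℝ) (k : Fin d),
        PBAI.lincomb (M (PBAI.eIdx hp k)) y = cv k + ∑ r, A' k r * y r :=
      fun y k => PBAI.lincomb_affine hp (hpow k) y
    have hA'z : ∀ z ∈ Z ∪ Zi, ∀ k, cv k + ∑ r, A' k r * (a z) r = z k := by
      intro z hz k
      rw [← haff]; exact hq_inv z hz k
    -- injectivity of A'
    have hA'inj : Function.Injective A'.mulVec := by
      intro v1 v2 h12
      by_contra hne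
      set u : Fin d → ℝ := v1 - v2 with hu
      have hune : u ≠ 0 := sub_ne_zero.mpr hne
      have hAu : A'.mulVec u = 0 := by rw [hu, Matrix.mulVec_sub, h12, sub_self]
      have hnorm : (0 : ℝ) < ‖u‖ := norm_pos_iff.mpr hune
      set s : ℝ := ρ / (2 * ‖u‖) with hs
      have hspos : 0 < s := by positivity
      have hmem2 : w0 + s • u ∈ Metric.ball w0 ρ := by
        rw [Metric.mem_ball, dist_eq_norm]
        have h2 : w0 + s • u - w0 = s • u := by abel
        rw [h2, norm_smul, Real.norm_eq_abs, abs_of_pos hspos, hs]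
        rw [div_mul_eq_mul_div]
        rw [div_lt_iff₀ (by positivity)]
        nlinarith
      obtain ⟨x1, hx1, hfx1⟩ := hball' (Metric.mem_ball_self hρpos)
      obtain ⟨z1, hz1, hgz1⟩ := hx1
      obtain ⟨x2, hx2, hfx2⟩ := hball' hmem2
      obtain ⟨z2, hz2, hgz2⟩ := hx2
      have ha1 : a z1 = w0 := by
        simp only [hadef]; rw [← hfx1]; exact congrArg f hgz1
      have ha2 : a z2 = w0 + s • u := by
        simp only [hadef]; rw [← hfx2]; exact congrArg f hgz2
      have hz12 : z1 = z2 := by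
        funext k
        have e1 := hA'z z1 hz1 k
        have e2 := hA'z z2 hz2 k
        rw [ha1] at e1
        rw [ha2] at e2
        have hdiff : ∑ r, A' k r * (w0 + s • u) r - ∑ r, A' k r * w0 r
            = s * (A'.mulVec u k) := by
          simp only [Matrix.mulVec, dotProduct, Pi.add_apply, Pi.smul_apply,
            smul_eq_mul, Finset.mul_sum, ← Finset.sum_sub_distrib]
          exact Finset.sum_congr rfl fun r _ => by ring
        rw [hAu] at hdiff
        simp only [Pi.zero_apply, mul_zero] at hdiff
        linarith
      have hww : w0 = w0 + s • u := by
        have h12' : a z1 = a z2 := by rw [hz12]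
        rw [ha1, ha2] at h12'
        exact h12'
      have hsu : s • u = 0 := by
        have h' := congrArg (fun x => x - w0) hww
        simpa using h'.symm
      exact hune (by simpa [smul_eq_zero, hspos.ne'] using hsu)
    have hA'unit : IsUnit A' := Matrix.mulVec_injective_iff_isUnit.mp hA'inj
    have hA'det : IsUnit A'.det := (Matrix.isUnit_iff_isUnit_det A').mp hA'unit
    have hAA' : A'⁻¹ * A' = 1 := Matrix.nonsing_inv_mul A' hA'det
    refine ⟨A'⁻¹, -(A'⁻¹.mulVec cv), Matrix.isUnit_nonsing_inv_iff.mpr hA'unit, ?_⟩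
    intro z hz
    show a z = _
    have h1 : A'.mulVec (a z) + cv = z := by
      funext k
      have := hA'z z hz k
      simp only [Matrix.mulVec, dotProduct, Pi.add_apply]
      linarith
    have h2 : A'.mulVec (a z) = z - cv := by rw [eq_sub_iff_add_eq]; exact h1
    have h3 : A'⁻¹.mulVec (A'.mulVec (a z)) = a z := by
      rw [Matrix.mulVec_mulVec, hAA', Matrix.one_mulVec]
    rw [← h3, h2, Matrix.mulVec_sub]
    abel

  obtain ⟨A, c, hAunit, hAzc⟩ := hEx
  have hAdet : IsUnit A.det := (Matrix.isUnit_iff_isUnit_det A).mp hAunit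
  have hAA : A * A⁻¹ = 1 := Matrix.mul_nonsing_inv A hAdet
  -- rows of A are nonzero
  have hrownz : ∀ r : Fin d, A r ≠ 0 := by
    intro r hr0
    have h1 : (A * A⁻¹) r r = 1 := by rw [hAA]; exact Matrix.one_apply_eq r
    rw [Matrix.mul_apply] at h1
    have h2 : ∀ s' : Fin d, A r s' * A⁻¹ s' r = 0 := fun s' => by
      rw [congrFun hr0 s']; simp
    have h3 : ∑ s' : Fin d, A r s' * A⁻¹ s' r = 0 := Finset.sum_eq_zero fun s' _ => h2 s'
    rw [h3] at h1
    exact one_ne_zero h1.symm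
  -- ===== Part 2 : block structure of rows i and j =====
  have hbounds : ∀ z ∈ Zi, ∀ r, αinf r ≤ z r ∧ z r ≤ αsup r := fun z hz r =>
    ⟨(hglb r).1 ⟨z, hz, rfl⟩, (hlub r).1 ⟨z, hz, rfl⟩⟩
  have hlt : ∀ r, αinf r < αsup r := by
    intro r
    have hx : αinf r + ζ / 2 ∈ B r := by
      rw [hB r]; left; constructor <;> [linarith; linarith]
    have hx2 : αinf r + ζ / 2 ∈ proj r Zi := hBsub r hx
    have h2 : αinf r + ζ / 2 ≤ αsup r := (hlub r).1 hx2
    linarith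
  set S : (Fin d → ℝ) → ℝ :=
    fun u => ∑ r, (if 0 ≤ u r then u r * αsup r else u r * αinf r) with hSdef
  have hSterm : ∀ (u : Fin d → ℝ), ∀ z ∈ Zi, ∀ r,
      u r * z r ≤ (if 0 ≤ u r then u r * αsup r else u r * αinf r) := by
    intro u z hz r
    rcases le_or_gt 0 (u r) with h | h
    · rw [if_pos h]; exact mul_le_mul_of_nonneg_left (hbounds z hz r).2 h
    · rw [if_neg (not_le.mpr h)]
      exact mul_le_mul_of_nonpos_left (hbounds z hz r).1 h.le
  have hSapprox : ∀ u : Fin d → ℝ, ∀ ε : ℝ, 0 < ε →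
      ∃ z ∈ Zi, S u - ε < ∑ r, u r * z r := by
    intro u ε hε
    set δ : ℝ := min ζ (ε / (∑ r, |u r| + 1)) with hδdef
    have hsum_nonneg : (0:ℝ) ≤ ∑ r, |u r| := Finset.sum_nonneg fun r _ => abs_nonneg _
    have hδpos : 0 < δ := lt_min hζ (by positivity)
    have hδζ : δ ≤ ζ := min_le_left _ _
    have hδε : δ ≤ ε / (∑ r, |u r| + 1) := min_le_right _ _
    set z : Fin d → ℝ := fun r => if 0 ≤ u r then αsup r - δ / 2 else αinf r + δ / 2 with hzdef
    have hzB : ∀ r, z r ∈ B r := by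
      intro r; rw [hB r]
      by_cases h : 0 ≤ u r
      · right; simp only [hzdef, if_pos h]
        constructor <;> linarith
      · left; simp only [hzdef, if_neg h]
        constructor <;> linarith
    have hzZi : z ∈ Zi := hBprod fun r _ => hzB r
    refine ⟨z, hzZi, ?_⟩
    have hterm : ∀ r, (if 0 ≤ u r then u r * αsup r else u r * αinf r) - |u r| * δ
        ≤ u r * z r := by
      intro r
      by_cases h : 0 ≤ u r
      · rw [if_pos h]; simp only [hzdef, if_pos h]
        have habs : |u r| = u r := abs_of_nonneg h
        nlinarith
      · rw [if_neg h]; simp only [hzdef, if_neg h]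
        have habs : |u r| = -u r := abs_of_neg (not_le.mp h)
        nlinarith
    have hkey : (∑ r, |u r|) * δ < ε := by
      have h1 : (∑ r, |u r|) * δ < (∑ r, |u r| + 1) * δ := by nlinarith
      have h2 : (∑ r, |u r| + 1) * δ ≤ ε := by
        have hpos : (0:ℝ) < ∑ r, |u r| + 1 := by positivity
        have h4 := mul_le_mul_of_nonneg_left hδε hpos.le
        rwa [mul_div_cancel₀ _ hpos.ne'] at h4
      linarith
    calc S u - ε < S u - (∑ r, |u r|) * δ := by linarith
    _ = ∑ r, ((if 0 ≤ u r then u r * αsup r else u r * αinf r) - |u r| * δ) := by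
        rw [Finset.sum_sub_distrib, ← Finset.sum_mul]
    _ ≤ ∑ r, u r * z r := Finset.sum_le_sum fun r _ => hterm r
  -- membership descriptions of the intervened image support
  have hmemZ : ∀ z ∈ Zi,
      A.mulVec z + c ∈ f '' ((fun z => G.mulVec (phi d p z)) '' Zi) := by
    intro z hz
    rw [← hAzc z (Or.inr hz)]
    exact ⟨G.mulVec (phi d p z), ⟨z, hz, rfl⟩, rfl⟩
  have hconv : ∀ y ∈ f '' ((fun z => G.mulVec (phi d p z)) '' Zi),
      ∃ z ∈ Zi, y = A.mulVec z + c := by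
    rintro y ⟨x, ⟨z, hz, rfl⟩, rfl⟩
    exact ⟨z, hz, hAzc z (Or.inr hz)⟩
  -- simultaneous approximate attainment via support independence
  have hreach : ∀ u v : Fin d → ℝ, (u = A i ∨ u = -(A i)) → (v = A j ∨ v = -(A j)) →
      ∀ ε : ℝ, 0 < ε →
      ∃ z ∈ Zi, S u - ε < ∑ r, u r * z r ∧ S v - ε < ∑ r, v r * z r := by
    intro u v hu hv ε hε
    obtain ⟨z1, hz1, hz1'⟩ := hSapprox u ε hε
    obtain ⟨z2, hz2, hz2'⟩ := hSapprox v ε hε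
    have hpair : ((A.mulVec z1 + c) i, (A.mulVec z2 + c) j) ∈
        (proj i (f '' ((fun z => G.mulVec (phi d p z)) '' Zi))) ×ˢ
        (proj j (f '' ((fun z => G.mulVec (phi d p z)) '' Zi))) :=
      ⟨⟨_, hmemZ z1 hz1, rfl⟩, ⟨_, hmemZ z2 hz2, rfl⟩⟩
    rw [← hsupphat] at hpair
    obtain ⟨y, hy, hyeq⟩ := hpair
    obtain ⟨z3, hz3, rfl⟩ := hconv y hy
    have heqi : (A.mulVec z3 + c) i = (A.mulVec z1 + c) i := congrArg Prod.fst hyeq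
    have heqj : (A.mulVec z3 + c) j = (A.mulVec z2 + c) j := congrArg Prod.snd hyeq
    have hi' : ∑ r, A i r * z3 r = ∑ r, A i r * z1 r := by
      simp only [Pi.add_apply, Matrix.mulVec, dotProduct] at heqi
      linarith
    have hj' : ∑ r, A j r * z3 r = ∑ r, A j r * z2 r := by
      simp only [Pi.add_apply, Matrix.mulVec, dotProduct] at heqj
      linarith
    refine ⟨z3, hz3, ?_, ?_⟩
    · rcases hu with rfl | rfl
      · rw [hi']; exact hz1'
      · have hneg : ∑ r, (-(A i)) r * z3 r = ∑ r, (-(A i)) r * z1 r := by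
          simp only [Pi.neg_apply, neg_mul, Finset.sum_neg_distrib]
          rw [hi']
        rw [hneg]; exact hz1'
    · rcases hv with rfl | rfl
      · rw [hj']; exact hz2'
      · have hneg : ∑ r, (-(A j)) r * z3 r = ∑ r, (-(A j)) r * z2 r := by
          simp only [Pi.neg_apply, neg_mul, Finset.sum_neg_distrib]
          rw [hj']
        rw [hneg]; exact hz2'
  -- the column disjointness
  have hcol : ∀ col : Fin d, A i col = 0 ∨ A j col = 0 := by
    intro k
    by_contra hk
    push_neg at hk
    obtain ⟨hik, hjk⟩ := hk
    set u : Fin d → ℝ := if 0 < A i k then A i else -(A i) with hudef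
    set v : Fin d → ℝ := if A j k < 0 then A j else -(A j) with hvdef
    have hu' : u = A i ∨ u = -(A i) := by
      rw [hudef]; split <;> [exact Or.inl rfl; exact Or.inr rfl]
    have hv' : v = A j ∨ v = -(A j) := by
      rw [hvdef]; split <;> [exact Or.inl rfl; exact Or.inr rfl]
    have huk : 0 < u k := by
      rw [hudef]; rcases lt_trichotomy (A i k) 0 with h | h | h
      · rw [if_neg (by linarith)]; simpa using h
      · exact absurd h hik
      · rw [if_pos h]; exact h
    have hvk : v k < 0 := by
      rw [hvdef]; rcases lt_trichotomy (A j k) 0 with h | h | h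
      · rw [if_pos h]; exact h
      · exact absurd h hjk
      · rw [if_neg (by linarith)]; simpa using h
    have hik' := hlt k
    set mid : ℝ := (αinf k + αsup k) / 2 with hmid
    set ε : ℝ := (min (u k) (-(v k))) * (αsup k - αinf k) / 2 with hεdef
    have hminpos : 0 < min (u k) (-(v k)) := lt_min huk (by linarith)
    have hεpos : 0 < ε := by
      rw [hεdef]
      exact div_pos (mul_pos hminpos (by linarith [hlt k])) two_pos
    obtain ⟨z, hz, hzu, hzv⟩ := hreach u v hu' hv' ε hεpos
    -- extract the coordinate-k bound for u
    have hcoord : ∀ w : Fin d → ℝ, 0 < w k →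
        (S w - ε < ∑ r, w r * z r) → w k * z k > w k * αsup k - ε := by
      intro w hwk hws
      have hsplit1 : ∑ r, w r * z r
          = w k * z k + ∑ r ∈ Finset.univ.erase k, w r * z r :=
        (Finset.add_sum_erase Finset.univ (fun r => w r * z r) (Finset.mem_univ k)).symm
      have hsplit2 : S w = (if 0 ≤ w k then w k * αsup k else w k * αinf k)
          + ∑ r ∈ Finset.univ.erase k, (if 0 ≤ w r then w r * αsup r else w r * αinf r) := by
        simp only [hSdef]
        exact (Finset.add_sum_erase Finset.univ
          (fun r => if 0 ≤ w r then w r * αsup r else w r * αinf r) (Finset.mem_univ k)).symm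
      have herase : ∑ r ∈ Finset.univ.erase k, w r * z r
          ≤ ∑ r ∈ Finset.univ.erase k, (if 0 ≤ w r then w r * αsup r else w r * αinf r) :=
        Finset.sum_le_sum fun r _ => hSterm w z hz r
      rw [if_pos hwk.le] at hsplit2
      rw [hsplit1] at hws
      linarith
    -- u side : z k > mid
    have hzk1 : mid < z k := by
      have h1 := hcoord u huk hzu
      have h2 : ε ≤ u k * (αsup k - αinf k) / 2 := by
        rw [hεdef]
        have := min_le_left (u k) (-(v k))
        nlinarith
      have h3 : u k * mid < u k * z k := by rw [hmid]; nlinarith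
      exact (mul_lt_mul_iff_right₀ huk).mp h3
    -- v side : z k < mid
    have hzk2 : z k < mid := by
      -- S v - ε < ∑ v r z r gives v k * z k > v k * αinf k - ε
      have hsplit1 : ∑ r, v r * z r
          = v k * z k + ∑ r ∈ Finset.univ.erase k, v r * z r :=
        (Finset.add_sum_erase Finset.univ (fun r => v r * z r) (Finset.mem_univ k)).symm
      have hsplit2 : S v = (if 0 ≤ v k then v k * αsup k else v k * αinf k)
          + ∑ r ∈ Finset.univ.erase k, (if 0 ≤ v r then v r * αsup r else v r * αinf r) := by
        simp only [hSdef]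
        exact (Finset.add_sum_erase Finset.univ
          (fun r => if 0 ≤ v r then v r * αsup r else v r * αinf r) (Finset.mem_univ k)).symm
      have herase : ∑ r ∈ Finset.univ.erase k, v r * z r
          ≤ ∑ r ∈ Finset.univ.erase k, (if 0 ≤ v r then v r * αsup r else v r * αinf r) :=
        Finset.sum_le_sum fun r _ => hSterm v z hz r
      rw [if_neg (not_le.mpr hvk)] at hsplit2
      rw [hsplit1] at hzv
      have h1 : v k * z k > v k * αinf k - ε := by linarith
      have h2 : ε ≤ (-(v k)) * (αsup k - αinf k) / 2 := by
        rw [hεdef]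
        have := min_le_right (u k) (-(v k))
        nlinarith
      have h3 : v k * mid < v k * z k := by rw [hmid]; nlinarith
      nlinarith
    linarith
  exact ⟨A, c, hAunit, hAzc, hrownz i, hrownz j, hcol⟩
end

section
/- Let d, n, p ≥ 1 and let Z, Z^{(i)} ⊆ ℝ^d with Z ∪ Z^{(i)} having nonempty interior. Assume: (a) for every coordinate r, the projection Z^{(i)}_r is bounded, with infimum α_inf^r and supremum α_sup^r, and there exists ζ > 0 such that the boundary strips B_r = (α_inf^r, α_inf^r + ζ) ∪ (α_sup^r − ζ, α_sup^r) satisfy B_r ⊆ Z^{(i)}_r and ∏_{r=1}^d B_r ⊆ Z^{(i)}; and (b) there is a set S ⊆ {1,…,d} such that Z^{(i)}_{i,j} = Z^{(i)}_i × Z^{(i)}_j for all j ∈ S. Let g(z) = G φ_p(z) with G ∈ ℝ^{n×M_{d,p}} of full column rank, h(z̃) = H φ_p(z̃) with H ∈ ℝ^{n×M_{d,p}}, and let f : ℝ^n → ℝ^d satisfy h(f(x)) = x for all x ∈ g(Z ∪ Z^{(i)}), with f(g(Z ∪ Z^{(i)})) having nonempty interior. Suppose there are an index k and a set S' ⊆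 {1,…,d}\{k} with |S'| ≤ |S| such that Ẑ^{(i)}_{k,m} = Ẑ^{(i)}_k × Ẑ^{(i)}_m for all m ∈ S', where Ẑ^{(i)} = f(g(Z^{(i)})). Then f(g(z)) = A z + c on Z ∪ Z^{(i)} for some invertible A ∈ ℝ^{d×d} and c ∈ ℝ^d and, writing a_r for the r-th row of A, the row a_k has at most d − |S'| nonzero entries, each row a_k and a_m (m ∈ S') is nonzero, and for every m ∈ S' the row a_m vanishes in every column in which a_k is nonzero. -/
open MvPolynomial in
lemma aux_analytic (d : ℕ) (q : MvPolynomial (Fin d) ℝ) :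
    AnalyticOnNhd ℝ (fun w : Fin d → ℝ => MvPolynomial.eval w q) Set.univ := by
  induction q using MvPolynomial.induction_on with
  | C a => simpa using analyticOnNhd_const
  | add f g hf hg => simp only [map_add]; exact hf.add hg
  | mul_X f i hf =>
      have hX : AnalyticOnNhd ℝ (fun w : Fin d → ℝ => w i) Set.univ :=
        (ContinuousLinearMap.proj i : (Fin d → ℝ) →L[ℝ] ℝ).analyticOnNhd _
      simpa using hf.mul hX

lemma aux_zero_of_open (d : ℕ) (q : MvPolynomial (Fin d) ℝ) (U : Set (Fin d → ℝ))
    (hU : IsOpen U) (hne : U.Nonempty) (h : ∀ w ∈ U, MvPolynomial.eval w q = 0) :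
    q = 0 := by
  obtain ⟨w₀, hw₀⟩ := hne
  have hall : ∀ w, MvPolynomial.eval w q = 0 := by
    have := (aux_analytic d q).eqOn_zero_of_preconnected_of_eventuallyEq_zero
      isPreconnected_univ (Set.mem_univ w₀)
      (Filter.eventuallyEq_of_mem (hU.mem_nhds hw₀) h)
    intro w; exact this (Set.mem_univ w)
  apply MvPolynomial.funext (q := 0)
  simpa using hall

open MvPolynomial Polynomial in
noncomputable def psi (d : ℕ) (v : Fin d → ℝ) : MvPolynomial (Fin d) ℝ →+* Polynomial ℝ :=
  MvPolynomial.eval₂Hom Polynomial.C (fun s => Polynomial.C (v s) * Polynomial.X)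

open MvPolynomial Polynomial in
lemma psi_monomial (d : ℕ) (v : Fin d → ℝ) (m : Fin d →₀ ℕ) (c : ℝ) :
    psi d v (MvPolynomial.monomial m c) =
      Polynomial.C (c * ∏ i ∈ m.support, v i ^ m i) *
        Polynomial.X ^ (∑ i ∈ m.support, m i) := by
  rw [psi, eval₂Hom_monomial]
  rw [Finsupp.prod]
  simp_rw [mul_pow]
  rw [Finset.prod_mul_distrib, ← Finset.prod_pow_eq_pow_sum]
  rw [map_mul, map_prod]
  simp_rw [map_pow]
  ring

open MvPolynomial Polynomial in
lemma psi_natDegree_le (d : ℕ) (v : Fin d → ℝ) (q : MvPolynomial (Fin d) ℝ) :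
    (psi d v q).natDegree ≤ q.totalDegree := by
  conv_lhs => rw [← q.support_sum_monomial_coeff]
  rw [map_sum]
  apply Polynomial.natDegree_sum_le_of_forall_le
  intro m hm
  rw [psi_monomial]
  refine (Polynomial.natDegree_mul_le).trans ?_
  simp only [Polynomial.natDegree_C, Polynomial.natDegree_pow, Polynomial.natDegree_X, zero_add,
    mul_one]
  exact MvPolynomial.le_totalDegree hm

open MvPolynomial Polynomial in
lemma psi_homogeneous (d : ℕ) (v : Fin d → ℝ) (r : MvPolynomial (Fin d) ℝ) (nn : ℕ)
    (h : r.IsHomogeneous nn) :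
    psi d v r = Polynomial.C (MvPolynomial.eval v r) * Polynomial.X ^ nn := by
  conv_lhs => rw [← r.support_sum_monomial_coeff]
  conv_rhs => rw [← r.support_sum_monomial_coeff]
  rw [map_sum, map_sum, map_sum, Finset.sum_mul]
  apply Finset.sum_congr rfl
  intro m hm
  rw [psi_monomial, MvPolynomial.eval_monomial]
  have hdeg : ∑ i ∈ m.support, m i = nn := by
    have := h (MvPolynomial.mem_support_iff.mp hm)
    rw [show (Finsupp.weight 1 : (Fin d →₀ ℕ) →+ ℕ) = Finsupp.weight (fun _ => 1) from rfl,
      ← Finsupp.degree_eq_weight_one] at this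
    exact this
  rw [hdeg, Finsupp.prod]

open MvPolynomial in
lemma exists_eval_ne_zero (d : ℕ) (r : MvPolynomial (Fin d) ℝ) (h : r ≠ 0) :
    ∃ v : Fin d → ℝ, MvPolynomial.eval v r ≠ 0 := by
  by_contra hc
  push_neg at hc
  exact h (MvPolynomial.funext (q := 0) (by simpa using hc))

open MvPolynomial in
lemma top_homog_ne_zero (d : ℕ) (q : MvPolynomial (Fin d) ℝ) (h : q ≠ 0) :
    MvPolynomial.homogeneousComponent q.totalDegree q ≠ 0 := by
  obtain ⟨m, hm, hdeg⟩ : ∃ m ∈ q.support, (m.sum fun _ e => e) = q.totalDegree := by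
    have hs : q.support.Nonempty := MvPolynomial.support_nonempty.mpr h
    obtain ⟨m, hm, hEq⟩ := Finset.exists_mem_eq_sup q.support hs (fun m => m.sum fun _ e => e)
    exact ⟨m, hm, hEq.symm⟩
  intro hc
  have : MvPolynomial.coeff m (MvPolynomial.homogeneousComponent q.totalDegree q) =
      MvPolynomial.coeff m q := by
    rw [MvPolynomial.coeff_homogeneousComponent, if_pos]
    exact hdeg
  rw [hc] at this
  exact (MvPolynomial.mem_support_iff.mp hm) this.symm

open MvPolynomial Polynomial in
lemma td_le_one_of_pow (d p : ℕ) (hp : 1 ≤ p) (q q' : MvPolynomial (Fin d) ℝ)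
    (h : q ^ p = q') (h' : q'.totalDegree ≤ p) : q.totalDegree ≤ 1 := by
  by_cases hq : q = 0
  · simp [hq]
  set t := q.totalDegree with ht
  obtain ⟨v, hv⟩ := exists_eval_ne_zero d _ (top_homog_ne_zero d q hq)
  have hcoeff : (psi d v q).coeff t = MvPolynomial.eval v (MvPolynomial.homogeneousComponent t q) := by
    conv_lhs => rw [← q.sum_homogeneousComponent]
    rw [map_sum, Polynomial.finset_sum_coeff]
    have hterm : ∀ j ∈ Finset.range (t + 1),
        (psi d v (MvPolynomial.homogeneousComponent j q)).coeff t =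
          if j = t then MvPolynomial.eval v (MvPolynomial.homogeneousComponent t q) else 0 := by
      intro j hj
      rw [psi_homogeneous d v _ j (MvPolynomial.homogeneousComponent_isHomogeneous j q),
        Polynomial.coeff_C_mul, Polynomial.coeff_X_pow]
      rcases eq_or_ne j t with hjt | hjt
      · simp [hjt]
      · simp [hjt, Ne.symm hjt]
    rw [Finset.sum_congr rfl hterm, Finset.sum_ite_eq' (Finset.range (t + 1)) t]
    simp
  have hndeg : (psi d v q).natDegree = t := by
    refine le_antisymm (psi_natDegree_le d v q) ?_
    apply Polynomial.le_natDegree_of_ne_zero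
    rw [hcoeff]; exact hv
  have hmul : p * t ≤ p := by
    calc p * t = ((psi d v q) ^ p).natDegree := by rw [Polynomial.natDegree_pow, hndeg]
    _ = (psi d v q').natDegree := by rw [← map_pow, h]
    _ ≤ q'.totalDegree := psi_natDegree_le d v q'
    _ ≤ p := h'
  have hmul' : p * t ≤ p * 1 := by simpa using hmul
  exact Nat.le_of_mul_le_mul_left hmul' (Nat.lt_of_lt_of_le Nat.zero_lt_one hp)

lemma multiidx_classify {d : ℕ} (m : Fin d →₀ ℕ) (h : (m.sum fun _ e => e) ≤ 1) :
    m = 0 ∨ ∃ s, m = Finsupp.single s 1 := by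
  rcases eq_or_ne m 0 with hm | hm
  · exact Or.inl hm
  right
  obtain ⟨s, hs⟩ : ∃ s, m s ≠ 0 := by
    by_contra hc; push_neg at hc; exact hm (Finsupp.ext hc)
  have hssup : s ∈ m.support := Finsupp.mem_support_iff.mpr hs
  have hsum : ∑ i ∈ m.support, m i ≤ 1 := h
  have hms : m s ≤ 1 := le_trans (Finset.single_le_sum (fun i _ => Nat.zero_le _) hssup) hsum
  have hms1 : m s = 1 := le_antisymm hms (Nat.one_le_iff_ne_zero.mpr hs)
  refine ⟨s, Finsupp.ext fun t => ?_⟩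
  rcases eq_or_ne t s with rfl | hts
  · simp [hms1]
  · rw [Finsupp.single_apply, if_neg (Ne.symm hts)]
    by_contra hc
    have htsup : t ∈ m.support := Finsupp.mem_support_iff.mpr hc
    have : m s + m t ≤ ∑ i ∈ m.support, m i :=
      Finset.add_le_sum (fun i _ => Nat.zero_le _) hssup htsup (Ne.symm hts)
    omega

lemma eval_of_td_le_one {d : ℕ} (q : MvPolynomial (Fin d) ℝ) (h : q.totalDegree ≤ 1)
    (w : Fin d → ℝ) :
    MvPolynomial.eval w q =
      (∑ s, MvPolynomial.coeff (Finsupp.single s 1) q * w s) + MvPolynomial.coeff 0 q := by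
  classical
  set T : Finset (Fin d →₀ ℕ) :=
    insert 0 (Finset.image (fun s => Finsupp.single s 1) Finset.univ) with hT
  have hsub : q.support ⊆ T := by
    intro m hm
    have hdeg : (m.sum fun _ e => e) ≤ 1 := le_trans (MvPolynomial.le_totalDegree hm) h
    rcases multiidx_classify m hdeg with rfl | ⟨s, rfl⟩
    · exact Finset.mem_insert_self _ _
    · exact Finset.mem_insert_of_mem (Finset.mem_image_of_mem _ (Finset.mem_univ s))
  rw [MvPolynomial.eval_eq' w q, Finset.sum_subset hsub
    (fun m _ hm => by rw [MvPolynomial.notMem_support_iff.mp hm, zero_mul])]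
  rw [hT, Finset.sum_insert (by simp [Finsupp.single_eq_zero])]
  rw [Finset.sum_image (fun a _ b _ hab => Finsupp.single_left_injective one_ne_zero hab)]
  rw [add_comm]
  congr 1
  · apply Finset.sum_congr rfl
    intro s _
    congr 1
    rw [Finset.prod_eq_single s (fun t _ hts => by simp [Finsupp.single_apply, Ne.symm hts])
      (fun ht => absurd (Finset.mem_univ s) ht)]
    simp
  · simp

section Geom

variable {d : ℕ} {Zi : Set (Fin d → ℝ)} {αinf αsup : Fin d → ℝ} {ζ : ℝ} {B : Fin d → Set ℝ}

lemma near_max (hd : 0 < d) (hζ : 0 < ζ)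
    (hB : ∀ r, B r = Set.Ioo (αinf r) (αinf r + ζ) ∪ Set.Ioo (αsup r - ζ) (αsup r))
    (hBprod : Set.univ.pi B ⊆ Zi)
    (a : Fin d → ℝ) (ε : ℝ) (hε : 0 < ε) :
    ∃ z1 ∈ Zi, (∑ s, (if 0 ≤ a s then a s * αsup s else a s * αinf s)) - ε ≤
      ∑ s, a s * z1 s := by
  have hdR : (0:ℝ) < d := by exact_mod_cast hd
  set δ : Fin d → ℝ := fun s => min (ε / (d * (|a s| + 1))) ζ with hδ
  have hδpos : ∀ s, 0 < δ s := fun s => lt_min (by positivity) hζ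
  have hδζ : ∀ s, δ s ≤ ζ := fun s => min_le_right _ _
  set z1 : Fin d → ℝ := fun s => if 0 ≤ a s then αsup s - δ s / 2 else αinf s + δ s / 2 with hz1
  have hmem : z1 ∈ Set.univ.pi B := by
    intro s _
    rw [hB s]
    by_cases hs : 0 ≤ a s
    · right
      simp only [hz1, if_pos hs, Set.mem_Ioo]
      constructor <;> [linarith [hδζ s, hδpos s]; linarith [hδpos s]]
    · left
      simp only [hz1, if_neg hs, Set.mem_Ioo]
      constructor <;> [linarith [hδpos s]; linarith [hδζ s, hδpos s]]
  refine ⟨z1, hBprod hmem, ?_⟩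
  have key : ∀ s, |a s| * δ s ≤ ε / d := by
    intro s
    have h1 : |a s| * δ s ≤ |a s| * (ε / (d * (|a s| + 1))) :=
      mul_le_mul_of_nonneg_left (min_le_left _ _) (abs_nonneg _)
    refine h1.trans ?_
    rw [mul_div_assoc', div_le_div_iff₀ (by positivity) hdR]
    have h2 : (0:ℝ) ≤ |a s| := abs_nonneg _
    nlinarith [hε.le]
  have hterm : ∀ s, (if 0 ≤ a s then a s * αsup s else a s * αinf s) - ε / d ≤ a s * z1 s := by
    intro s
    by_cases hs : 0 ≤ a s
    · rw [if_pos hs]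
      simp only [hz1, if_pos hs]
      have h3 : a s * (δ s / 2) ≤ |a s| * δ s := by
        apply mul_le_mul (le_abs_self _) (by linarith [hδpos s]) (by linarith [hδpos s]) (abs_nonneg _)
      have h5 : a s * (δ s / 2) ≤ ε / ↑d := h3.trans (key s)
      have hexp : a s * (αsup s - δ s / 2) = a s * αsup s - a s * (δ s / 2) := by ring
      linarith
    · rw [if_neg hs]
      simp only [hz1, if_neg hs]
      push_neg at hs
      have h3 : -(|a s| * δ s) ≤ a s * (δ s / 2) := by
        have h4 : -|a s| ≤ a s := neg_abs_le _
        nlinarith [hδpos s, abs_nonneg (a s)]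
      have h5 : -(ε / ↑d) ≤ a s * (δ s / 2) := by
        have := key s; linarith
      have hexp : a s * (αinf s + δ s / 2) = a s * αinf s + a s * (δ s / 2) := by ring
      linarith
  calc (∑ s, (if 0 ≤ a s then a s * αsup s else a s * αinf s)) - ε
      = ∑ s, ((if 0 ≤ a s then a s * αsup s else a s * αinf s) - ε / d) := by
        rw [Finset.sum_sub_distrib, Finset.sum_const, Finset.card_univ, Fintype.card_fin,
          nsmul_eq_mul]
        rw [mul_div_cancel₀ _ (ne_of_gt hdR)]
    _ ≤ ∑ s, a s * z1 s := Finset.sum_le_sum fun s _ => hterm s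

lemma core_geom
    (hglb : ∀ r, IsGLB (proj r Zi) (αinf r)) (hlub : ∀ r, IsLUB (proj r Zi) (αsup r))
    (hζ : 0 < ζ)
    (hB : ∀ r, B r = Set.Ioo (αinf r) (αinf r + ζ) ∪ Set.Ioo (αsup r - ζ) (αsup r))
    (hBsub : ∀ r, B r ⊆ proj r Zi)
    (hBprod : Set.univ.pi B ⊆ Zi)
    (u v : Fin d → ℝ) (r : Fin d) (hur : 0 < u r) (hvr : v r < 0)
    (hprod : ∀ z1 ∈ Zi, ∀ z2 ∈ Zi, ∃ z ∈ Zi,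
      (∑ s, u s * z s) = (∑ s, u s * z1 s) ∧ (∑ s, v s * z s) = (∑ s, v s * z2 s)) :
    False := by
  have hd : 0 < d := r.pos
  have hbox : ∀ z ∈ Zi, ∀ s, αinf s ≤ z s ∧ z s ≤ αsup s := by
    intro z hz s
    exact ⟨(hglb s).1 ⟨z, hz, rfl⟩, (hlub s).1 ⟨z, hz, rfl⟩⟩
  have hgap : αinf r + ζ ≤ αsup r := by
    by_contra hlt
    push_neg at hlt
    set x := (max (αinf r) (αsup r) + (αinf r + ζ)) / 2 with hx
    have hmaxlt : max (αinf r) (αsup r) < αinf r + ζ := max_lt (by linarith) hlt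
    have hx1 : αinf r < x := by
      have := le_max_left (αinf r) (αsup r); rw [hx]; linarith
    have hx2 : x < αinf r + ζ := by rw [hx]; linarith
    have hmem : x ∈ B r := by rw [hB r]; left; exact ⟨hx1, hx2⟩
    have hle : x ≤ αsup r := (hlub r).1 (hBsub r hmem)
    have := le_max_right (αinf r) (αsup r)
    rw [hx] at hle; linarith
  set ε : ℝ := ζ / 4 * min (u r) (-v r) with hε
  have hεpos : 0 < ε := by
    apply mul_pos (by linarith) (lt_min hur (by linarith))
  obtain ⟨z1, hz1, hz1max⟩ := near_max hd hζ hB hBprod u ε hεpos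
  obtain ⟨z2, hz2, hz2max⟩ := near_max hd hζ hB hBprod v ε hεpos
  obtain ⟨z, hz, hequ, heqv⟩ := hprod z1 hz1 z2 hz2
  have hmax : ∀ (a : Fin d → ℝ), ∀ s, a s * z s ≤ (if 0 ≤ a s then a s * αsup s else a s * αinf s) := by
    intro a s
    by_cases hs : 0 ≤ a s
    · rw [if_pos hs]; exact mul_le_mul_of_nonneg_left (hbox z hz s).2 hs
    · rw [if_neg hs]; push_neg at hs
      exact mul_le_mul_of_nonpos_left (hbox z hz s).1 hs.le
  have extract : ∀ (a : Fin d → ℝ),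
      (∑ s, (if 0 ≤ a s then a s * αsup s else a s * αinf s)) - ε ≤ ∑ s, a s * z s →
      (if 0 ≤ a r then a r * αsup r else a r * αinf r) - ε ≤ a r * z r := by
    intro a ha
    have hsplit1 : (∑ s, a s * z s) =
        a r * z r + ∑ s ∈ Finset.univ.erase r, a s * z s :=
      (Finset.add_sum_erase _ _ (Finset.mem_univ r)).symm
    have hsplit2 : (∑ s, (if 0 ≤ a s then a s * αsup s else a s * αinf s)) =
        (if 0 ≤ a r then a r * αsup r else a r * αinf r) +
          ∑ s ∈ Finset.univ.erase r, (if 0 ≤ a s then a s * αsup s else a s * αinf s) :=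
      (Finset.add_sum_erase _ _ (Finset.mem_univ r)).symm
    have hle : ∑ s ∈ Finset.univ.erase r, a s * z s ≤
        ∑ s ∈ Finset.univ.erase r, (if 0 ≤ a s then a s * αsup s else a s * αinf s) :=
      Finset.sum_le_sum fun s _ => hmax a s
    linarith
  have hu' := extract u (by rw [hequ]; exact hz1max)
  have hv' := extract v (by rw [heqv]; exact hz2max)
  rw [if_pos hur.le] at hu'
  rw [if_neg (not_le.mpr hvr)] at hv'
  have hεu : ε ≤ ζ / 4 * u r := by
    rw [hε]; exact mul_le_mul_of_nonneg_left (min_le_left _ _) (by linarith)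
  have hεv : ε ≤ ζ / 4 * (-v r) := by
    rw [hε]; exact mul_le_mul_of_nonneg_left (min_le_right _ _) (by linarith)
  have hzr1 : αsup r - ζ / 4 ≤ z r := by
    have h1 : u r * (αsup r - z r) ≤ ε := by nlinarith
    nlinarith
  have hzr2 : z r ≤ αinf r + ζ / 4 := by
    have h1 : (-v r) * (z r - αinf r) ≤ ε := by nlinarith
    nlinarith
  linarith

end Geom
/-- **block-affine identification under perfect and imperfect
interventions.**  The interventional support `Zi` has bounded coordinate projections
with `ζ`-thick boundary strips `B r` contained in the projections and whose product lies
in `Zi`, and the intervened latent `i` has support independent of every `j ∈ S`.  If the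
full-column-rank polynomial decoder `g`, learned polynomial decoder `h`, and encoder `f`
satisfy the reconstruction identity on `g(Z ∪ Zi)` with the interior conditions, and the
encoder output support `Ẑ = f(g(Zi))` satisfies support independence for the pairs
`(k, m)`, `m ∈ S'` with `k ∉ S'` and `|S'| ≤ |S|`, then `f ∘ g = A · + c` with `A`
invertible, the row `A k` has at most `d - |S'|` nonzero entries, the rows `A k` and
`A m` (`m ∈ S'`) are nonzero, and `A m` vanishes in every column where `A k` is
nonzero. -/
theorem block_affine_identification
    (d n p : ℕ) (hd : 1 ≤ d) (hn : 1 ≤ n) (hp : 1 ≤ p)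
    (Z Zi : Set (Fin d → ℝ)) (hZ : (interior (Z ∪ Zi)).Nonempty)
    (αinf αsup : Fin d → ℝ)
    (hglb : ∀ r, IsGLB (proj r Zi) (αinf r))
    (hlub : ∀ r, IsLUB (proj r Zi) (αsup r))
    (ζ : ℝ) (hζ : 0 < ζ)
    (B : Fin d → Set ℝ)
    (hB : ∀ r, B r =
      Set.Ioo (αinf r) (αinf r + ζ) ∪ Set.Ioo (αsup r - ζ) (αsup r))
    (hBsub : ∀ r, B r ⊆ proj r Zi)
    (hBprod : Set.univ.pi B ⊆ Zi)
    (i : Fin d) (S : Finset (Fin d))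
    (hsupp : ∀ j ∈ S, proj2 i j Zi = (proj i Zi) ×ˢ (proj j Zi))
    (G H : Matrix (Fin n) (MultiIdx d p) ℝ)
    (hG : Function.Injective G.mulVec)
    (f : (Fin n → ℝ) → (Fin d → ℝ))
    (hrec : ∀ x ∈ (fun z => G.mulVec (phi d p z)) '' (Z ∪ Zi),
      H.mulVec (phi d p (f x)) = x)
    (himg : (interior (f '' ((fun z => G.mulVec (phi d p z)) '' (Z ∪ Zi)))).Nonempty)
    (k : Fin d) (S' : Finset (Fin d)) (hkS' : k ∉ S') (hcard : S'.card ≤ S.card)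
    (hsupphat : ∀ m ∈ S',
      proj2 k m (f '' ((fun z => G.mulVec (phi d p z)) '' Zi)) =
        (proj k (f '' ((fun z => G.mulVec (phi d p z)) '' Zi))) ×ˢ
        (proj m (f '' ((fun z => G.mulVec (phi d p z)) '' Zi)))) :
    ∃ (A : Matrix (Fin d) (Fin d) ℝ) (c : Fin d → ℝ), IsUnit A ∧
      (∀ z ∈ Z ∪ Zi, f (G.mulVec (phi d p z)) = A.mulVec z + c) ∧
      (Finset.univ.filter (fun col => A k col ≠ 0)).card ≤ d - S'.card ∧
      A k ≠ 0 ∧ (∀ m ∈ S', A m ≠ 0) ∧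
      (∀ m ∈ S', ∀ col : Fin d, A k col ≠ 0 → A m col = 0) := by
  classical
  set F : (Fin d → ℝ) → (Fin d → ℝ) := fun z => f (G.mulVec (phi d p z)) with hF
  -- Step 1: left inverse of G and the linear map L'
  have hinj2 : Function.Injective (Matrix.mulVecLin G) := by
    intro x y hxy; apply hG; simpa [Matrix.mulVecLin_apply] using hxy
  obtain ⟨E, hE⟩ :=
    (Matrix.mulVecLin G).exists_leftInverse_of_injective (LinearMap.ker_eq_bot.mpr hinj2)
  set L' : (MultiIdx d p → ℝ) →ₗ[ℝ] (MultiIdx d p → ℝ) := E ∘ₗ Matrix.mulVecLin H with hL'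
  have hmain : ∀ z ∈ Z ∪ Zi, phi d p z = L' (phi d p (F z)) := by
    intro z hz
    have h1 : H.mulVec (phi d p (F z)) = G.mulVec (phi d p z) := hrec _ ⟨z, hz, rfl⟩
    have h2 : E (G.mulVec (phi d p z)) = phi d p z := by
      have := LinearMap.congr_fun hE (phi d p z)
      simpa [Matrix.mulVecLin_apply] using this
    rw [hL']
    simp only [LinearMap.comp_apply, Matrix.mulVecLin_apply, h1, h2]
  -- Step 2: multi-indices e_r and p·e_r
  have hp1 : 1 < p + 1 := by omega
  have h0 : 0 < p + 1 := by omega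
  set er : Fin d → MultiIdx d p := fun r =>
    ⟨fun s => if s = r then ⟨1, hp1⟩ else ⟨0, h0⟩, by
      simp only [apply_ite (Fin.val)]
      rw [Finset.sum_ite_eq' Finset.univ r]
      simp [hp]⟩ with her
  set pr : Fin d → MultiIdx d p := fun r =>
    ⟨fun s => if s = r then ⟨p, by omega⟩ else ⟨0, h0⟩, by
      simp only [apply_ite (Fin.val)]
      rw [Finset.sum_ite_eq' Finset.univ r]
      simp⟩ with hpr
  have hphier : ∀ (z : Fin d → ℝ) r, phi d p z (er r) = z r := by
    intro z r
    rw [phi, her]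
    rw [Finset.prod_eq_single r (fun t _ hts => by simp [if_neg hts]) (by simp)]
    simp
  have hphipr : ∀ (z : Fin d → ℝ) r, phi d p z (pr r) = z r ^ p := by
    intro z r
    rw [phi, hpr]
    rw [Finset.prod_eq_single r (fun t _ hts => by simp [if_neg hts]) (by simp)]
    simp
  -- Step 3: polynomial dictionary
  set P : MultiIdx d p → MvPolynomial (Fin d) ℝ := fun m0 =>
    ∑ m' : MultiIdx d p, MvPolynomial.C (L' ((Pi.single m' (1:ℝ)) : MultiIdx d p → ℝ) m0) *
      ∏ s, (MvPolynomial.X s : MvPolynomial (Fin d) ℝ) ^ ((m'.1 s : ℕ)) with hP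
  have hPeval : ∀ (m0 : MultiIdx d p) (w : Fin d → ℝ),
      MvPolynomial.eval w (P m0) = L' (phi d p w) m0 := by
    intro m0 w
    have hdecomp : phi d p w = ∑ m' : MultiIdx d p,
        (phi d p w m') • ((Pi.single m' (1:ℝ)) : MultiIdx d p → ℝ) := by
      have h1 : ∀ m' : MultiIdx d p, (phi d p w m') • ((Pi.single m' (1:ℝ)) : MultiIdx d p → ℝ) =
          (Pi.single m' (phi d p w m') : MultiIdx d p → ℝ) := by
        intro m'; rw [← Pi.single_smul]; simp
      simp_rw [h1]
      exact (Finset.univ_sum_single (phi d p w)).symm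
    rw [hP]
    simp only [map_sum]
    rw [hdecomp, map_sum]
    simp only [map_smul, Finset.sum_apply, Pi.smul_apply, smul_eq_mul]
    apply Finset.sum_congr rfl
    intro m' _
    rw [map_mul, MvPolynomial.eval_C, map_prod]
    simp only [map_pow, MvPolynomial.eval_X]
    rw [phi]
    ring
  have hPdeg : ∀ m0, (P m0).totalDegree ≤ p := by
    intro m0
    rw [hP]
    refine (MvPolynomial.totalDegree_finset_sum _ _).trans ?_
    apply Finset.sup_le
    intro m' _
    refine (MvPolynomial.totalDegree_mul _ _).trans ?_
    rw [MvPolynomial.totalDegree_C, zero_add]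
    refine (MvPolynomial.totalDegree_finset_prod _ _).trans ?_
    refine le_trans (Finset.sum_le_sum (fun s _ => ?_)) m'.2
    refine (MvPolynomial.totalDegree_pow _ _).trans ?_
    rw [MvPolynomial.totalDegree_X, mul_one]
  -- Step 4: key evaluation identities on the image of F
  have hid : ∀ z ∈ Z ∪ Zi, ∀ m0, phi d p z m0 = MvPolynomial.eval (F z) (P m0) := by
    intro z hz m0
    rw [hPeval, ← hmain z hz]
  have himg' : (interior (F '' (Z ∪ Zi))).Nonempty := by
    rwa [Set.image_image] at himg
  have hpoweq : ∀ r, (P (er r)) ^ p = P (pr r) := by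
    intro r
    have hzero : ∀ w ∈ interior (F '' (Z ∪ Zi)),
        MvPolynomial.eval w ((P (er r)) ^ p - P (pr r)) = 0 := by
      intro w hw
      obtain ⟨z, hz, rfl⟩ := interior_subset hw
      rw [map_sub, map_pow]
      rw [← hid z hz, ← hid z hz, hphier, hphipr, sub_self]
    have := aux_zero_of_open d _ _ isOpen_interior himg' hzero
    exact sub_eq_zero.mp this
  have hdeg1 : ∀ r, (P (er r)).totalDegree ≤ 1 := by
    intro r
    exact td_le_one_of_pow d p hp _ _ (hpoweq r) (hPdeg (pr r))
  -- Step 5: the affine relation z = Lmat (F z) + b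
  set Lmat : Matrix (Fin d) (Fin d) ℝ :=
    Matrix.of (fun r s => MvPolynomial.coeff (Finsupp.single s 1) (P (er r))) with hLmat
  set b : Fin d → ℝ := fun r => MvPolynomial.coeff 0 (P (er r)) with hb
  have haffine : ∀ z ∈ Z ∪ Zi, z = Lmat.mulVec (F z) + b := by
    intro z hz
    funext r
    have h1 : z r = MvPolynomial.eval (F z) (P (er r)) := by
      rw [← hid z hz, hphier]
    rw [h1, eval_of_td_le_one _ (hdeg1 r)]
    simp [hLmat, hb, Matrix.mulVec, dotProduct]
  -- Step 6: Lmat is invertible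
  have hLunit : IsUnit Lmat := by
    have hsubset : Z ∪ Zi ⊆ (fun w => w + b) ''
        ((LinearMap.range (Matrix.mulVecLin Lmat) : Submodule ℝ (Fin d → ℝ)) : Set (Fin d → ℝ)) := by
      intro z hz
      exact ⟨Lmat.mulVec (F z), ⟨F z, rfl⟩, (haffine z hz).symm⟩
    have h2 : (interior ((fun w => w + b) ''
        ((LinearMap.range (Matrix.mulVecLin Lmat) : Submodule ℝ (Fin d → ℝ)) : Set (Fin d → ℝ)))).Nonempty := by
      obtain ⟨x, hx⟩ := hZ
      exact ⟨x, interior_mono hsubset hx⟩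
    have h3 : (interior ((LinearMap.range (Matrix.mulVecLin Lmat) :
        Submodule ℝ (Fin d → ℝ)) : Set (Fin d → ℝ))).Nonempty := by
      have heq : (fun w : Fin d → ℝ => w + b) = (Homeomorph.addRight b) := rfl
      rw [heq, ← Homeomorph.image_interior] at h2
      obtain ⟨x, hx⟩ := h2
      obtain ⟨y, hy, _⟩ := hx
      exact ⟨y, hy⟩
    have h4 : LinearMap.range (Matrix.mulVecLin Lmat) = ⊤ :=
      Submodule.eq_top_of_nonempty_interior' _ h3
    have h5 : Function.Surjective Lmat.mulVec := by
      intro y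
      obtain ⟨x, hx⟩ := LinearMap.range_eq_top.mp h4 y
      exact ⟨x, by simpa [Matrix.mulVecLin_apply] using hx⟩
    exact Matrix.mulVec_surjective_iff_isUnit.mp h5
  have hdet : IsUnit Lmat.det := (Matrix.isUnit_iff_isUnit_det _).mp hLunit
  set A : Matrix (Fin d) (Fin d) ℝ := Lmat⁻¹ with hA
  set c : Fin d → ℝ := -(A.mulVec b) with hc
  have hAunit : IsUnit A := Matrix.isUnit_nonsing_inv_iff.mpr hLunit
  have haff2 : ∀ z ∈ Z ∪ Zi, F z = A.mulVec z + c := by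
    intro z hz
    have h1 : A.mulVec z = F z + A.mulVec b := by
      conv_lhs => rw [haffine z hz]
      rw [Matrix.mulVec_add, Matrix.mulVec_mulVec, hA, Matrix.nonsing_inv_mul _ hdet,
        Matrix.one_mulVec]
    rw [hc]
    rw [h1]; abel
  -- Step 7: rows of A
  have hrows : LinearIndependent ℝ (fun r => A r) :=
    Matrix.linearIndependent_rows_iff_isUnit.mpr hAunit
  -- Step 8: support disjointness
  have hdisj : ∀ m ∈ S', ∀ col : Fin d, A k col ≠ 0 → A m col = 0 := by
    intro m hm col hkcol
    by_contra hmcol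
    have hprod0 : ∀ z1 ∈ Zi, ∀ z2 ∈ Zi, ∃ z ∈ Zi,
        (∑ s, A k s * z s) = (∑ s, A k s * z1 s) ∧
        (∑ s, A m s * z s) = (∑ s, A m s * z2 s) := by
      intro z1 hz1 z2 hz2
      have hhat : ((F z1) k, (F z2) m) ∈
          proj2 k m (f '' ((fun z => G.mulVec (phi d p z)) '' Zi)) := by
        rw [hsupphat m hm]
        constructor
        · exact ⟨F z1, by rw [Set.image_image]; exact ⟨z1, hz1, rfl⟩, rfl⟩
        · exact ⟨F z2, by rw [Set.image_image]; exact ⟨z2, hz2, rfl⟩, rfl⟩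
      obtain ⟨w, hwmem, hweq⟩ := hhat
      rw [Set.image_image] at hwmem
      obtain ⟨z, hz, rfl⟩ := hwmem
      refine ⟨z, hz, ?_, ?_⟩
      · have h1 : (F z) k = (F z1) k := congrArg Prod.fst hweq
        rw [haff2 z (Or.inr hz), haff2 z1 (Or.inr hz1)] at h1
        simpa [Matrix.mulVec, dotProduct] using h1
      · have h1 : (F z) m = (F z2) m := congrArg Prod.snd hweq
        rw [haff2 z (Or.inr hz), haff2 z2 (Or.inr hz2)] at h1
        simpa [Matrix.mulVec, dotProduct] using h1
    have hflip : ∀ (w : Fin d → ℝ) (z z' : Fin d → ℝ),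
        (∑ s, w s * z s) = (∑ s, w s * z' s) →
        (∑ s, (-w) s * z s) = (∑ s, (-w) s * z' s) := by
      intro w z z' h
      simp only [Pi.neg_apply, neg_mul, Finset.sum_neg_distrib]
      exact neg_inj.mpr h
    rcases lt_or_gt_of_ne hkcol with hkneg | hkpos
    · rcases lt_or_gt_of_ne hmcol with hmneg | hmpos
      · -- A k col < 0, A m col < 0 : u = -A k (pos), v = A m (neg)
        refine core_geom hglb hlub hζ hB hBsub hBprod (-(A k)) (A m) col
          (by simpa using hkneg) hmneg ?_
        intro z1 hz1 z2 hz2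
        obtain ⟨z, hz, h1, h2⟩ := hprod0 z1 hz1 z2 hz2
        exact ⟨z, hz, hflip _ _ _ h1, h2⟩
      · -- A k col < 0, A m col > 0 : u = -A k, v = -A m
        refine core_geom hglb hlub hζ hB hBsub hBprod (-(A k)) (-(A m)) col
          (by simpa using hkneg) (by simpa using hmpos) ?_
        intro z1 hz1 z2 hz2
        obtain ⟨z, hz, h1, h2⟩ := hprod0 z1 hz1 z2 hz2
        exact ⟨z, hz, hflip _ _ _ h1, hflip _ _ _ h2⟩
    · rcases lt_or_gt_of_ne hmcol with hmneg | hmpos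
      · refine core_geom hglb hlub hζ hB hBsub hBprod (A k) (A m) col hkpos hmneg ?_
        intro z1 hz1 z2 hz2
        exact hprod0 z1 hz1 z2 hz2
      · refine core_geom hglb hlub hζ hB hBsub hBprod (A k) (-(A m)) col hkpos
          (by simpa using hmpos) ?_
        intro z1 hz1 z2 hz2
        obtain ⟨z, hz, h1, h2⟩ := hprod0 z1 hz1 z2 hz2
        exact ⟨z, hz, h1, hflip _ _ _ h2⟩
  -- Step 9: cardinality bound
  set T : Finset (Fin d) := Finset.univ.filter (fun col => A k col ≠ 0) with hT
  have hcardT : T.card ≤ d - S'.card := by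
    have hsubfam : LinearIndependent ℝ (fun m : {x // x ∈ S'} => A m.1) :=
      hrows.comp _ Subtype.val_injective
    have hres : LinearIndependent ℝ
        (fun m : {x // x ∈ S'} => (fun col : {x // x ∈ Tᶜ} => A m.1 col.1)) := by
      rw [Fintype.linearIndependent_iff] at hsubfam ⊢
      intro gcoef hg
      apply hsubfam gcoef
      funext col
      by_cases hcol : col ∈ T
      · have hcol' : A k col ≠ 0 := (Finset.mem_filter.mp hcol).2
        have : ∀ m : {x // x ∈ S'}, A m.1 col = 0 := fun m => hdisj m.1 m.2 col hcol'
        simp only [Finset.sum_apply, Pi.smul_apply, smul_eq_mul]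
        rw [Finset.sum_congr rfl (fun m _ => by rw [this m, mul_zero])]
        simp
      · have hcol' : col ∈ Tᶜ := Finset.mem_compl.mpr hcol
        have := congrFun hg (⟨col, hcol'⟩ : {x // x ∈ Tᶜ})
        simpa using this
    have hle : Fintype.card {x // x ∈ S'} ≤
        Module.finrank ℝ ({x // x ∈ Tᶜ} → ℝ) := hres.fintype_card_le_finrank
    rw [Module.finrank_fintype_fun_eq_card] at hle
    rw [Fintype.card_coe, Fintype.card_coe, Finset.card_compl, Fintype.card_fin] at hle
    have hTle : T.card ≤ d := by
      have := Finset.card_le_univ T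
      simpa using this
    omega
  refine ⟨A, c, hAunit, fun z hz => haff2 z hz, hcardT, hrows.ne_zero k, ?_, hdisj⟩
  intro m hm
  exact hrows.ne_zero m
end

section
/- Let d, n, p ≥ 1 and let Z ⊆ ℝ^d have nonempty interior. Assume: (a) for every coordinate r, the projection Z_r is bounded, with infimum β_inf^r and supremum β_sup^r, and there exists ζ > 0 such that the boundary strips B_r = (β_inf^r, β_inf^r + ζ) ∪ (β_sup^r − ζ, β_sup^r) satisfy B_r ⊆ Z_r and ∏_{r=1}^d B_r ⊆ Z; and (b) Z_{r,s} = Z_r × Z_s for all r ≠ s. Let g(z) = G φ_p(z) with G ∈ ℝ^{n×M_{d,p}} of full column rank, h(z̃) = H φ_p(z̃) with H ∈ ℝ^{n×M_{d,p}}, and let f : ℝ^n → ℝ^d satisfy h(f(x)) = x for all x ∈ g(Z), with f(g(Z)) having nonempty interior. Suppose the image Ẑ = f(g(Z)) satisfies Ẑ_{k,m} = Ẑ_k × Ẑ_m for all k ≠ m. Then there exist a permutation matrix Π, an invertible diagonal matrix Λ, and c ∈ ℝ^d such that f(g(z)) = Λ Π z + c for all z ∈ Z. -/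
open Polynomial

/-- multi-index with single entry `e` at `k`. -/
def msingle {d p : ℕ} (k : Fin d) (e : ℕ) (he : e ≤ p) : MultiIdx d p :=
  ⟨fun j => if j = k then ⟨e, Nat.lt_succ_of_le he⟩ else ⟨0, Nat.succ_pos p⟩, by
    simp only [apply_ite (Fin.val)]
    rw [Finset.sum_ite_eq' Finset.univ k]
    simpa using he⟩

lemma phi_msingle {d p : ℕ} (z : Fin d → ℝ) (k : Fin d) (e : ℕ) (he : e ≤ p) :
    phi d p z (msingle k e he) = z k ^ e := by
  unfold phi msingle
  rw [Finset.prod_eq_single k]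
  · simp
  · intro j _ hj; simp [hj]
  · simp

noncomputable def qfun {d p : ℕ} (E : MultiIdx d p → MultiIdx d p → ℝ) (m : MultiIdx d p)
    (y : Fin d → ℝ) : ℝ := ∑ m' : MultiIdx d p, phi d p y m' * E m' m

noncomputable def Pline {d p : ℕ} (E : MultiIdx d p → MultiIdx d p → ℝ) (m : MultiIdx d p)
    (x v : Fin d → ℝ) : ℝ[X] :=
  ∑ m' : MultiIdx d p, C (E m' m) * ∏ j, (C (x j) + C (v j) * X) ^ (m'.1 j : ℕ)

lemma Pline_eval {d p : ℕ} (E : MultiIdx d p → MultiIdx d p → ℝ) (m : MultiIdx d p)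
    (x v : Fin d → ℝ) (t : ℝ) : (Pline E m x v).eval t = qfun E m (x + t • v) := by
  unfold Pline qfun phi
  rw [Polynomial.eval_finset_sum]
  refine Finset.sum_congr rfl fun m' _ => ?_
  rw [eval_mul, eval_C, mul_comm, Polynomial.eval_prod]
  congr 1
  refine Finset.prod_congr rfl fun j _ => ?_
  rw [eval_pow, eval_add, eval_C, eval_mul, eval_C, eval_X]
  simp only [Pi.add_apply, Pi.smul_apply, smul_eq_mul]
  ring

lemma Pline_natDegree_le {d p : ℕ} (E : MultiIdx d p → MultiIdx d p → ℝ) (m : MultiIdx d p)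
    (x v : Fin d → ℝ) : (Pline E m x v).natDegree ≤ p := by
  apply Polynomial.natDegree_sum_le_of_forall_le
  intro m' _
  refine le_trans (Polynomial.natDegree_mul_le) ?_
  rw [Polynomial.natDegree_C, zero_add]
  refine le_trans (Polynomial.natDegree_prod_le _ _) (le_trans ?_ m'.2)
  refine Finset.sum_le_sum fun j _ => ?_
  refine le_trans Polynomial.natDegree_pow_le ?_
  have h1 : (C (x j) + C (v j) * X).natDegree ≤ 1 := by
    refine le_trans (Polynomial.natDegree_add_le _ _) ?_
    simp only [Polynomial.natDegree_C, max_le_iff]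
    exact ⟨Nat.zero_le _, le_trans Polynomial.natDegree_mul_le (by simp)⟩
  calc (m'.1 j : ℕ) * (C (x j) + C (v j) * X).natDegree ≤ (m'.1 j : ℕ) * 1 :=
        Nat.mul_le_mul_left _ h1
    _ = (m'.1 j : ℕ) := Nat.mul_one _

lemma qfun_continuous {d p : ℕ} (E : MultiIdx d p → MultiIdx d p → ℝ) (m : MultiIdx d p) :
    Continuous (qfun E m) := by
  unfold qfun phi
  refine continuous_finset_sum _ fun m' _ => ?_
  exact (continuous_finset_prod _ fun j _ => (continuous_apply j).pow _).mul continuous_const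

lemma affine_of_midpoint {d : ℕ} (b : (Fin d → ℝ) → ℝ) (hc : Continuous b)
    (hm : ∀ x y, b (midpoint ℝ x y) = midpoint ℝ (b x) (b y)) :
    ∀ y, b y = b 0 + ∑ j, y j * (b (Pi.single j 1) - b 0) := by
  set b' : (Fin d → ℝ) → ℝ := fun y => b y - b 0 with hb'
  have h0 : b' 0 = 0 := by simp [hb']
  have hm' : ∀ x y, b' (midpoint ℝ x y) = midpoint ℝ (b' x) (b' y) := by
    intro x y
    simp only [hb']
    rw [hm x y]
    simp only [midpoint_eq_smul_add, smul_eq_mul, invOf_eq_inv]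
    ring
  let φ : (Fin d → ℝ) →+ ℝ := AddMonoidHom.ofMapMidpoint ℝ ℝ b' h0 hm'
  have hφc : Continuous φ := hc.sub continuous_const
  have hsmul : ∀ (c : ℝ) (x : Fin d → ℝ), φ (c • x) = c • φ x := map_real_smul φ hφc
  intro y
  have hy : y = ∑ j, y j • (Pi.single j 1 : Fin d → ℝ) := by
    funext i
    simp [Finset.sum_apply, Pi.single_apply, Finset.sum_ite_eq]
  have hφy : φ y = ∑ j, y j * (b (Pi.single j 1) - b 0) := by
    conv_lhs => rw [hy]
    rw [map_sum]
    refine Finset.sum_congr rfl fun j _ => ?_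
    rw [hsmul]
    simp [φ, AddMonoidHom.ofMapMidpoint, b']
  have : φ y = b y - b 0 := rfl
  rw [this] at hφy
  linarith [hφy]

noncomputable def bstar {d : ℕ} (βinf βsup : Fin d → ℝ) (u : Fin d → ℝ) (j : Fin d) : ℝ :=
  if 0 ≤ u j then βsup j else βinf j

noncomputable def Fval {d : ℕ} (βinf βsup : Fin d → ℝ) (u : Fin d → ℝ) : ℝ :=
  ∑ j, u j * bstar βinf βsup u j

lemma near_sup {d : ℕ} (Z : Set (Fin d → ℝ)) (βinf βsup : Fin d → ℝ) (ζ : ℝ)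
    (B : Fin d → Set ℝ) (hζ : 0 < ζ)
    (hB : ∀ r, B r = Set.Ioo (βinf r) (βinf r + ζ) ∪ Set.Ioo (βsup r - ζ) (βsup r))
    (hBprod : Set.univ.pi B ⊆ Z) (u : Fin d → ℝ) (ε : ℝ) (hε : 0 < ε) :
    ∃ z ∈ Z, Fval βinf βsup u - ε < ∑ j, u j * z j := by
  set δ' : ℝ := ε / (∑ j, |u j| + 1) with hδ'
  have hsumabs : (0:ℝ) ≤ ∑ j, |u j| := Finset.sum_nonneg fun j _ => abs_nonneg _
  have hδ'pos : 0 < δ' := by positivity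
  set η : ℝ := min ζ δ' / 2 with hη
  have hηpos : 0 < η := by
    have := lt_min_iff.mpr ⟨hζ, hδ'pos⟩
    positivity
  have hηζ : η < ζ := by
    have h1 : min ζ δ' ≤ ζ := min_le_left _ _
    have : η ≤ ζ / 2 := by rw [hη]; linarith
    linarith
  have hηδ' : η ≤ δ' / 2 := by
    have h1 : min ζ δ' ≤ δ' := min_le_right _ _
    rw [hη]; linarith
  set z : Fin d → ℝ := fun j => if 0 ≤ u j then βsup j - η else βinf j + η with hzdef
  have hzB : ∀ j, z j ∈ B j := by
    intro j
    rw [hB j]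
    by_cases h : 0 ≤ u j
    · right
      simp only [hzdef, if_pos h, Set.mem_Ioo]
      constructor <;> linarith
    · left
      simp only [hzdef, if_neg h, Set.mem_Ioo]
      constructor <;> linarith
  have hzZ : z ∈ Z := hBprod (fun j _ => hzB j)
  refine ⟨z, hzZ, ?_⟩
  have hterm : ∀ j, u j * bstar βinf βsup u j - u j * z j = |u j| * η := by
    intro j
    by_cases h : 0 ≤ u j
    · simp only [bstar, hzdef, if_pos h, abs_of_nonneg h]
      ring
    · simp only [bstar, hzdef, if_neg h, abs_of_neg (lt_of_not_ge h)]
      ring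
  have hdiff : Fval βinf βsup u - ∑ j, u j * z j = (∑ j, |u j|) * η := by
    rw [Fval, ← Finset.sum_sub_distrib, Finset.sum_mul]
    exact Finset.sum_congr rfl fun j _ => hterm j
  have hlt : (∑ j, |u j|) * η < ε := by
    have h1 : (∑ j, |u j|) * η ≤ (∑ j, |u j|) * (δ' / 2) :=
      mul_le_mul_of_nonneg_left hηδ' hsumabs
    have h2 : (∑ j, |u j|) * (δ' / 2) < (∑ j, |u j| + 1) * δ' := by
      have := mul_pos (by linarith : (0:ℝ) < ∑ j, |u j| + 1) hδ'pos
      nlinarith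
    have h3 : (∑ j, |u j| + 1) * δ' = ε := by
      rw [hδ']; field_simp
    linarith
  linarith

lemma pin {d : ℕ} (Z : Set (Fin d → ℝ)) (βinf βsup : Fin d → ℝ)
    (hbd : ∀ z ∈ Z, ∀ j, βinf j ≤ z j ∧ z j ≤ βsup j)
    (u : Fin d → ℝ) (s : Fin d) (z : Fin d → ℝ) (hz : z ∈ Z) (hus : u s ≠ 0) (δ : ℝ)
    (hlt : Fval βinf βsup u - ∑ j, u j * z j < |u s| * δ) :
    |bstar βinf βsup u s - z s| < δ := by
  have hterm : ∀ j, 0 ≤ u j * (bstar βinf βsup u j - z j) := by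
    intro j
    by_cases h : 0 ≤ u j
    · have := (hbd z hz j).2
      simp only [bstar, if_pos h]
      exact mul_nonneg h (by linarith)
    · have := (hbd z hz j).1
      simp only [bstar, if_neg h]
      exact mul_nonneg_of_nonpos_of_nonpos (le_of_lt (lt_of_not_ge h)) (by linarith)
  have hsum : ∑ j, u j * (bstar βinf βsup u j - z j) = Fval βinf βsup u - ∑ j, u j * z j := by
    rw [Fval, ← Finset.sum_sub_distrib]
    exact Finset.sum_congr rfl fun j _ => by ring
  have hle : u s * (bstar βinf βsup u s - z s) ≤ ∑ j, u j * (bstar βinf βsup u j - z j) :=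
    Finset.single_le_sum (fun j _ => hterm j) (Finset.mem_univ s)
  have heq : u s * (bstar βinf βsup u s - z s) = |u s| * |bstar βinf βsup u s - z s| := by
    by_cases h : 0 ≤ u s
    · have := (hbd z hz s).2
      rw [abs_of_nonneg h, abs_of_nonneg (by simp only [bstar, if_pos h]; linarith)]
    · have := (hbd z hz s).1
      rw [abs_of_neg (lt_of_not_ge h), abs_of_nonpos (by simp only [bstar, if_neg h]; linarith)]
      ring
  have habs : |u s| * |bstar βinf βsup u s - z s| < |u s| * δ := by
    rw [← heq]; linarith [hsum ▸ hle]
  exact lt_of_mul_lt_mul_left habs (abs_nonneg _) |>.trans_le le_rfl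
/-- **identification up to permutation, shift and scaling from observational
data with independent support.**  The observational support `Z` has bounded coordinate
projections with `ζ`-thick boundary strips `B r` contained in the projections and whose
product lies in `Z`, and satisfies pairwise support independence.  If the full-column-rank
polynomial decoder `g`, learned polynomial decoder `h`, and encoder `f` satisfy the
reconstruction identity on `g(Z)` with the interior conditions, and the encoder output
support `Ẑ = f(g(Z))` satisfies pairwise support independence, then
`f (g z) = Λ Π z + c` on `Z`, where `Π` is the permutation (matrix) of a permutation `σ`
and `Λ` is an invertible diagonal matrix. -/
theorem permutation_scaling_identification_independent_support
    (d n p : ℕ) (hd : 1 ≤ d) (hn : 1 ≤ n) (hp : 1 ≤ p)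
    (Z : Set (Fin d → ℝ)) (hZ : (interior Z).Nonempty)
    (βinf βsup : Fin d → ℝ)
    (hglb : ∀ r, IsGLB (proj r Z) (βinf r))
    (hlub : ∀ r, IsLUB (proj r Z) (βsup r))
    (ζ : ℝ) (hζ : 0 < ζ)
    (B : Fin d → Set ℝ)
    (hB : ∀ r, B r =
      Set.Ioo (βinf r) (βinf r + ζ) ∪ Set.Ioo (βsup r - ζ) (βsup r))
    (hBsub : ∀ r, B r ⊆ proj r Z)
    (hBprod : Set.univ.pi B ⊆ Z)
    (hsupp : ∀ r s : Fin d, r ≠ s → proj2 r s Z = (proj r Z) ×ˢ (proj s Z))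
    (G H : Matrix (Fin n) (MultiIdx d p) ℝ)
    (hG : Function.Injective G.mulVec)
    (f : (Fin n → ℝ) → (Fin d → ℝ))
    (hrec : ∀ x ∈ (fun z => G.mulVec (phi d p z)) '' Z,
      H.mulVec (phi d p (f x)) = x)
    (himg : (interior (f '' ((fun z => G.mulVec (phi d p z)) '' Z))).Nonempty)
    (hsupphat : ∀ k m : Fin d, k ≠ m →
      proj2 k m (f '' ((fun z => G.mulVec (phi d p z)) '' Z)) =
        (proj k (f '' ((fun z => G.mulVec (phi d p z)) '' Z))) ×ˢ
        (proj m (f '' ((fun z => G.mulVec (phi d p z)) '' Z)))) :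
    ∃ (Λ : Fin d → ℝ) (σ : Equiv.Perm (Fin d)) (c : Fin d → ℝ),
      (∀ r, Λ r ≠ 0) ∧
      ∀ z ∈ Z, f (G.mulVec (phi d p z)) =
        (Matrix.diagonal Λ).mulVec (fun r => z (σ r)) + c := by
  classical
  -- ### Part A : the map z ↦ f (g z) is affine with invertible matrix on Z
  have hker : LinearMap.ker (Matrix.mulVecLin G) = ⊥ := by
    rw [LinearMap.ker_eq_bot]
    exact hG
  obtain ⟨l, hl⟩ := LinearMap.exists_leftInverse_of_injective (Matrix.mulVecLin G) hker
  have hlG : ∀ v, l (G.mulVec v) = v := by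
    intro v
    have := LinearMap.congr_fun hl v
    simpa using this
  set w : (Fin d → ℝ) → (Fin d → ℝ) := fun z => f (G.mulVec (phi d p z)) with hwdef
  set Zhat := f '' ((fun z => G.mulVec (phi d p z)) '' Z) with hZhatdef
  have hwZ : ∀ z ∈ Z, w z ∈ Zhat := by
    intro z hz
    rw [hZhatdef]
    exact ⟨G.mulVec (phi d p z), ⟨z, hz, rfl⟩, rfl⟩
  have hsurj : ∀ y ∈ Zhat, ∃ z ∈ Z, w z = y := by
    rw [hZhatdef]
    rintro y ⟨x, ⟨z, hz, rfl⟩, rfl⟩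
    exact ⟨z, hz, rfl⟩
  set E : MultiIdx d p → MultiIdx d p → ℝ :=
    fun m' => l (H.mulVec (Pi.single m' 1)) with hEdef
  have hlH : ∀ v : MultiIdx d p → ℝ, l (H.mulVec v) = ∑ m', v m' • E m' := by
    intro v
    have hv0 : v = ∑ m', v m' • (Pi.single m' 1 : MultiIdx d p → ℝ) := by
      funext i
      simp [Finset.sum_apply, Pi.single_apply, Finset.sum_ite_eq]
    have hv : H.mulVec v = ∑ m', v m' • H.mulVec (Pi.single m' 1) := by
      conv_lhs => rw [hv0]
      rw [show H.mulVec = ⇑(Matrix.mulVecLin H) from rfl, map_sum]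
      simp only [map_smul]
    rw [hv, map_sum]
    simp only [map_smul, hEdef]
  have key1 : ∀ z ∈ Z, ∀ m : MultiIdx d p, phi d p z m = qfun E m (w z) := by
    intro z hz m
    have h1 : H.mulVec (phi d p (w z)) = G.mulVec (phi d p z) := hrec _ ⟨z, hz, rfl⟩
    have h2 : phi d p z = ∑ m', phi d p (w z) m' • E m' := by
      rw [← hlG (phi d p z), ← h1, hlH]
    have h3 := congrFun h2 m
    simpa [qfun, Finset.sum_apply, smul_eq_mul] using h3
  set avec : (Fin d → ℝ) → Fin d → ℝ := fun y k => qfun E (msingle k 1 hp) y with havecdef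
  have key1' : ∀ z ∈ Z, ∀ k, avec (w z) k = z k := by
    intro z hz k
    have := key1 z hz (msingle k 1 hp)
    rw [phi_msingle, pow_one] at this
    exact this.symm
  have key2 : ∀ y ∈ Zhat, ∀ m : MultiIdx d p, qfun E m y = phi d p (avec y) m := by
    intro y hy m
    obtain ⟨z, hz, rfl⟩ := hsurj y hy
    rw [← key1 z hz m]
    simp only [phi]
    exact Finset.prod_congr rfl fun k _ => by rw [key1' z hz k]
  obtain ⟨y₀, hy₀⟩ := himg
  obtain ⟨r, hr0, hball⟩ : ∃ r > 0, Metric.ball y₀ r ⊆ Zhat := by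
    obtain ⟨r, hr0, hba⟩ := Metric.isOpen_iff.mp isOpen_interior y₀ hy₀
    exact ⟨r, hr0, hba.trans interior_subset⟩
  have hglob : ∀ (x : Fin d → ℝ) (k : Fin d),
      (avec x k) ^ p = qfun E (msingle k p le_rfl) x := by
    intro x k
    set v : Fin d → ℝ := x - y₀ with hv
    set F : Polynomial ℝ :=
      (Pline E (msingle k 1 hp) y₀ v) ^ p - Pline E (msingle k p le_rfl) y₀ v with hF
    have hrpos : 0 < r / (‖v‖ + 1) := by positivity
    have hroots : ∀ t ∈ Set.Ioo (0:ℝ) (r / (‖v‖ + 1)), Polynomial.IsRoot F t := by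
      intro t ht
      obtain ⟨ht0, htr⟩ := ht
      have hmem : y₀ + t • v ∈ Metric.ball y₀ r := by
        rw [Metric.mem_ball, dist_eq_norm]
        have h1 : y₀ + t • v - y₀ = t • v := by abel
        rw [h1, norm_smul, Real.norm_eq_abs, abs_of_pos ht0]
        have h2 : ‖v‖ ≤ ‖v‖ + 1 := by linarith
        calc t * ‖v‖ ≤ t * (‖v‖ + 1) := by nlinarith [norm_nonneg v]
          _ < r := by
            rw [← lt_div_iff₀ (by positivity : (0:ℝ) < ‖v‖ + 1)]
            exact htr
      have hZm : y₀ + t • v ∈ Zhat := hball hmem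
      have h2 := key2 _ hZm (msingle k p le_rfl)
      show F.eval t = 0
      rw [hF, Polynomial.eval_sub, Polynomial.eval_pow, Pline_eval, Pline_eval, sub_eq_zero,
        h2, phi_msingle]
    have hF0 : F = 0 := Polynomial.eq_zero_of_infinite_isRoot F
      ((Set.Ioo_infinite hrpos).mono hroots)
    have h1 := congrArg (Polynomial.eval (1:ℝ)) hF0
    simp only [hF, Polynomial.eval_sub, Polynomial.eval_pow, Pline_eval,
      Polynomial.eval_zero, sub_eq_zero, one_smul] at h1
    have h2 : y₀ + v = x := by rw [hv]; abel
    rw [h2] at h1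
    exact h1
  have hmid : ∀ (k : Fin d) (x y : Fin d → ℝ),
      avec (midpoint ℝ x y) k = midpoint ℝ (avec x k) (avec y k) := by
    intro k x y
    set A : Polynomial ℝ := Pline E (msingle k 1 hp) x (y - x) with hA
    have hApow : A ^ p = Pline E (msingle k p le_rfl) x (y - x) := by
      apply Polynomial.funext
      intro t
      rw [Polynomial.eval_pow, hA, Pline_eval, Pline_eval]
      exact hglob (x + t • (y - x)) k
    have hdeg : A.natDegree ≤ 1 := by
      rcases eq_or_ne A 0 with h | h
      · simp [h]
      · have hlc : A.leadingCoeff ^ p ≠ 0 :=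
          pow_ne_zero _ (Polynomial.leadingCoeff_ne_zero.mpr h)
        have h1 : (A ^ p).natDegree = p * A.natDegree := Polynomial.natDegree_pow' hlc
        have h2 : (A ^ p).natDegree ≤ p := by
          rw [hApow]; exact Pline_natDegree_le _ _ _ _
        have hp0 : 0 < p := hp
        apply Nat.le_of_mul_le_mul_left _ hp0
        rw [Nat.mul_one, ← h1]
        exact h2
    have hA1 : A = Polynomial.C (A.coeff 1) * Polynomial.X + Polynomial.C (A.coeff 0) :=
      Polynomial.eq_X_add_C_of_degree_le_one (Polynomial.natDegree_le_iff_degree_le.mp hdeg)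
    have heval : ∀ t : ℝ, avec (x + t • (y - x)) k = A.coeff 1 * t + A.coeff 0 := by
      intro t
      have h1 : A.eval t = qfun E (msingle k 1 hp) (x + t • (y - x)) := Pline_eval _ _ _ _ _
      have h2 : A.eval t = A.coeff 1 * t + A.coeff 0 := by
        conv_lhs => rw [hA1]
        simp
      rw [← h2, h1]
    have e0 := heval 0
    have e1 := heval 1
    have eh := heval 2⁻¹
    rw [show x + (0:ℝ) • (y - x) = x by simp] at e0
    rw [show x + (1:ℝ) • (y - x) = y by rw [one_smul]; abel] at e1
    rw [show x + (2⁻¹:ℝ) • (y - x) = midpoint ℝ x y by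
      rw [midpoint_eq_smul_add, invOf_eq_inv, smul_sub, smul_add]
      funext i
      simp only [Pi.add_apply, Pi.sub_apply, Pi.smul_apply, smul_eq_mul]
      ring] at eh
    rw [eh, e0, e1, midpoint_eq_smul_add, invOf_eq_inv, smul_eq_mul]
    ring
  have haff : ∀ (y : Fin d → ℝ) (k : Fin d),
      avec y k = avec 0 k + ∑ j, y j * (avec (Pi.single j 1) k - avec 0 k) := by
    intro y k
    have hc : Continuous (fun y => avec y k) := by
      simp only [havecdef]
      exact qfun_continuous E _
    exact affine_of_midpoint (fun y => avec y k) hc (fun x y => hmid k x y) y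
  set A' : Matrix (Fin d) (Fin d) ℝ :=
    Matrix.of (fun k j => avec (Pi.single j 1) k - avec 0 k) with hA'def
  set a0 : Fin d → ℝ := fun k => avec 0 k with ha0def
  have key3 : ∀ z ∈ Z, ∀ k, z k = a0 k + ∑ j, (w z) j * A' k j := by
    intro z hz k
    have h1 : z k = avec (w z) k := (key1' z hz k).symm
    rw [h1, haff (w z) k]
    simp only [hA'def, ha0def, Matrix.of_apply]
  -- ### invertibility of A'
  have hdet : A'.det ≠ 0 := by
    intro hdet0
    obtain ⟨u, hu0, huA⟩ := Matrix.exists_vecMul_eq_zero_iff.mpr hdet0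
    have hconst : ∀ z ∈ Z, ∑ k, u k * z k = ∑ k, u k * a0 k := by
      intro z hz
      have h1 : ∑ k, u k * z k = ∑ k, u k * (a0 k + ∑ j, (w z) j * A' k j) :=
        Finset.sum_congr rfl fun k _ => by rw [← key3 z hz k]
      have h2 : ∑ k, u k * (a0 k + ∑ j, (w z) j * A' k j)
          = ∑ k, u k * a0 k + ∑ j, (Matrix.vecMul u A') j * (w z) j := by
        simp only [mul_add, Finset.sum_add_distrib]
        congr 1
        calc ∑ x, u x * ∑ j, w z j * A' x j
            = ∑ x, ∑ j, u x * (w z j * A' x j) := by simp only [Finset.mul_sum]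
          _ = ∑ j, ∑ x, u x * (w z j * A' x j) := Finset.sum_comm
          _ = ∑ j, (Matrix.vecMul u A') j * w z j := by
              refine Finset.sum_congr rfl fun j _ => ?_
              simp only [Matrix.vecMul, dotProduct, Finset.sum_mul]
              exact Finset.sum_congr rfl fun x _ => by ring
      rw [h1, h2, huA]
      simp
    obtain ⟨z₀, hz₀i⟩ := hZ
    obtain ⟨r₂, hr₂0, hball₂⟩ := Metric.isOpen_iff.mp isOpen_interior z₀ hz₀i
    have hz₀Z : z₀ ∈ Z := interior_subset hz₀i
    obtain ⟨j₀, hj₀⟩ := Function.ne_iff.mp hu0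
    have hj₀' : u j₀ ≠ 0 := by simpa using hj₀
    set z' : Fin d → ℝ := fun j => if j = j₀ then z₀ j + r₂/2 else z₀ j with hz'def
    have hz'b : z' ∈ Metric.ball z₀ r₂ := by
      rw [Metric.mem_ball, dist_pi_lt_iff hr₂0]
      intro i
      by_cases h : i = j₀
      · subst h
        simp only [hz'def, if_pos rfl, Real.dist_eq]
        rw [show z₀ i + r₂/2 - z₀ i = r₂/2 by ring, abs_of_pos (by linarith)]
        linarith
      · simp only [hz'def, if_neg h, Real.dist_eq, sub_self, abs_zero]
        linarith
    have hz'Z : z' ∈ Z := interior_subset (hball₂ hz'b)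
    have h1 := hconst z' hz'Z
    have h2 := hconst z₀ hz₀Z
    have hdiffsum : ∑ k, u k * z' k - ∑ k, u k * z₀ k = u j₀ * (r₂/2) := by
      rw [← Finset.sum_sub_distrib, Finset.sum_eq_single j₀]
      · simp only [hz'def, if_pos rfl]
        ring
      · intro j _ hj
        simp only [hz'def, if_neg hj]
        ring
      · intro h
        exact absurd (Finset.mem_univ _) h
    rw [h1, h2, sub_self] at hdiffsum
    have : u j₀ = 0 := by
      have hr2 : r₂/2 ≠ 0 := by positivity
      rcases mul_eq_zero.mp hdiffsum.symm with h | h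
      · exact h
      · exact absurd h hr2
    exact hj₀' this
  have hunit : IsUnit A'.det := isUnit_iff_ne_zero.mpr hdet
  set M : Matrix (Fin d) (Fin d) ℝ := A'⁻¹ with hMdef
  have hMA : M * A' = 1 := Matrix.nonsing_inv_mul A' hunit
  have hAM : A' * M = 1 := Matrix.mul_nonsing_inv A' hunit
  set c0 : Fin d → ℝ := -(M.mulVec a0) with hc0def
  have key4 : ∀ z ∈ Z, w z = M.mulVec z + c0 := by
    intro z hz
    have h1 : z = a0 + A'.mulVec (w z) := by
      funext k
      have h2 : (A'.mulVec (w z)) k = ∑ j, (w z) j * A' k j := by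
        simp only [Matrix.mulVec, dotProduct]
        exact Finset.sum_congr rfl fun j _ => mul_comm _ _
      rw [Pi.add_apply, h2]
      exact key3 z hz k
    have h2 : M.mulVec z = M.mulVec a0 + w z := by
      conv_lhs => rw [h1]
      rw [Matrix.mulVec_add, Matrix.mulVec_mulVec, hMA, Matrix.one_mulVec]
    rw [h2, hc0def]
    abel
  have hMinj : Function.Injective M.mulVec := by
    intro x y hxy
    have h := congrArg A'.mulVec hxy
    rwa [Matrix.mulVec_mulVec, Matrix.mulVec_mulVec, hAM, Matrix.one_mulVec,
      Matrix.one_mulVec] at h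
  -- ### Part B : M is a scaled permutation matrix
  have hbd : ∀ z ∈ Z, ∀ j, βinf j ≤ z j ∧ z j ≤ βsup j := by
    intro z hz j
    exact ⟨(hglb j).1 ⟨z, hz, rfl⟩, (hlub j).1 ⟨z, hz, rfl⟩⟩
  have hζle : ∀ s, βinf s + ζ ≤ βsup s := by
    intro s
    by_contra hcon
    push_neg at hcon
    set t := (max (βinf s) (βsup s) + (βinf s + ζ))/2 with htdef
    have hmax1 : βinf s ≤ max (βinf s) (βsup s) := le_max_left _ _
    have hmax2 : βsup s ≤ max (βinf s) (βsup s) := le_max_right _ _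
    have hmaxlt : max (βinf s) (βsup s) < βinf s + ζ := max_lt (by linarith) hcon
    have ht1 : βinf s < t := by rw [htdef]; linarith
    have ht2 : t < βinf s + ζ := by rw [htdef]; linarith
    have htB : t ∈ B s := by
      rw [hB s]; left; exact ⟨ht1, ht2⟩
    have hle := (hlub s).1 (hBsub s htB)
    rw [htdef] at hle
    linarith
  have hkey : ∀ (i : Fin d) (z z' : Fin d → ℝ), z ∈ Z → z' ∈ Z → (w z) i = (w z') i →
      ∑ j, M i j * z j = ∑ j, M i j * z' j := by
    intro i z z' hz hz' he
    rw [key4 z hz, key4 z' hz'] at he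
    simp only [Pi.add_apply, add_left_inj] at he
    simpa only [Matrix.mulVec, dotProduct] using he
  have hcol : ∀ k m s, k ≠ m → M k s ≠ 0 → M m s ≠ 0 → False := by
    intro k m s hkm hks hms
    set εk : ℝ := if 0 ≤ M k s then 1 else -1 with hεk
    set εm : ℝ := if 0 ≤ M m s then -1 else 1 with hεm
    set u : Fin d → ℝ := fun j => εk * M k j with hu
    set v : Fin d → ℝ := fun j => εm * M m j with hvv
    have hus : 0 < u s := by
      by_cases h : 0 ≤ M k s
      · have he : u s = M k s := by simp [hu, hεk, if_pos h]
        rw [he]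
        exact lt_of_le_of_ne h (Ne.symm hks)
      · have he : u s = -M k s := by simp [hu, hεk, if_neg h]
        rw [he]
        have := lt_of_not_ge h
        linarith
    have hvs : v s < 0 := by
      by_cases h : 0 ≤ M m s
      · have he : v s = -M m s := by simp [hvv, hεm, if_pos h]
        rw [he]
        have := lt_of_le_of_ne h (Ne.symm hms)
        linarith
      · have he : v s = M m s := by simp [hvv, hεm, if_neg h]
        rw [he]
        exact lt_of_not_ge h
    have hbstaru : bstar βinf βsup u s = βsup s := by
      rw [bstar, if_pos (le_of_lt hus)]
    have hbstarv : bstar βinf βsup v s = βinf s := by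
      rw [bstar, if_neg (not_le.mpr hvs)]
    have husne : u s ≠ 0 := ne_of_gt hus
    have hvsne : v s ≠ 0 := ne_of_lt hvs
    have hεu : 0 < |u s| * (ζ/3) := mul_pos (abs_pos.mpr husne) (by linarith)
    have hεv : 0 < |v s| * (ζ/3) := mul_pos (abs_pos.mpr hvsne) (by linarith)
    obtain ⟨z₁, hz₁Z, hz₁⟩ := near_sup Z βinf βsup ζ B hζ hB hBprod u (|u s| * (ζ/3)) hεu
    obtain ⟨z₂, hz₂Z, hz₂⟩ := near_sup Z βinf βsup ζ B hζ hB hBprod v (|v s| * (ζ/3)) hεv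
    have hm1 : (w z₁) k ∈ proj k Zhat := ⟨w z₁, hwZ z₁ hz₁Z, rfl⟩
    have hm2 : (w z₂) m ∈ proj m Zhat := ⟨w z₂, hwZ z₂ hz₂Z, rfl⟩
    have hpair : ((w z₁) k, (w z₂) m) ∈ proj2 k m Zhat := by
      rw [hsupphat k m hkm]
      exact Set.mk_mem_prod hm1 hm2
    obtain ⟨yh, hyhZ, hyheq⟩ := hpair
    obtain ⟨z₃, hz₃Z, rfl⟩ := hsurj yh hyhZ
    have heqk : (w z₃) k = (w z₁) k := congrArg Prod.fst hyheq
    have heqm : (w z₃) m = (w z₂) m := congrArg Prod.snd hyheq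
    have hmulsum : ∀ (e : ℝ) (i : Fin d) (zz : Fin d → ℝ),
        e * ∑ j, M i j * zz j = ∑ j, (e * M i j) * zz j := by
      intro e i zz
      rw [Finset.mul_sum]
      exact Finset.sum_congr rfl fun j _ => by ring
    have h3k : ∑ j, u j * z₃ j = ∑ j, u j * z₁ j := by
      have h := congrArg (fun tt => εk * tt) (hkey k z₃ z₁ hz₃Z hz₁Z heqk)
      rw [hmulsum, hmulsum] at h
      simpa only [hu] using h
    have h3m : ∑ j, v j * z₃ j = ∑ j, v j * z₂ j := by
      have h := congrArg (fun tt => εm * tt) (hkey m z₃ z₂ hz₃Z hz₂Z heqm)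
      rw [hmulsum, hmulsum] at h
      simpa only [hvv] using h
    have hFu : Fval βinf βsup u - ∑ j, u j * z₃ j < |u s| * (ζ/3) := by
      rw [h3k]; linarith
    have hFv : Fval βinf βsup v - ∑ j, v j * z₃ j < |v s| * (ζ/3) := by
      rw [h3m]; linarith
    have hpin1 := pin Z βinf βsup hbd u s z₃ hz₃Z husne (ζ/3) hFu
    have hpin2 := pin Z βinf βsup hbd v s z₃ hz₃Z hvsne (ζ/3) hFv
    rw [hbstaru] at hpin1
    rw [hbstarv] at hpin2
    have ha1 := abs_lt.mp hpin1
    have ha2 := abs_lt.mp hpin2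
    have := hζle s
    linarith [ha1.1, ha1.2, ha2.1, ha2.2]
  have hcolex : ∀ s, ∃ k, M k s ≠ 0 := by
    intro s
    by_contra hno
    push_neg at hno
    have h1 : M.mulVec (Pi.single s 1) = M.mulVec 0 := by
      rw [Matrix.mulVec_zero, Matrix.mulVec_single]
      funext i
      simp [hno i]
    have h2 := congrFun (hMinj h1) s
    simp [Pi.single_apply] at h2
  choose ρfun hρfun using hcolex
  have huniq : ∀ s k, M k s ≠ 0 → k = ρfun s := by
    intro s k hk
    by_contra hne
    exact hcol k (ρfun s) s hne hk (hρfun s)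
  have hρinj : Function.Injective ρfun := by
    intro s s' hss
    by_contra hne
    have h1 : M (ρfun s) s ≠ 0 := hρfun s
    have h2 : M (ρfun s) s' ≠ 0 := by rw [hss]; exact hρfun s'
    set x : Fin d → ℝ :=
      M (ρfun s) s' • (Pi.single s 1 : Fin d → ℝ) - M (ρfun s) s • (Pi.single s' 1 : Fin d → ℝ)
      with hxdef
    have hx : M.mulVec x = M.mulVec 0 := by
      rw [Matrix.mulVec_zero, hxdef, Matrix.mulVec_sub, Matrix.mulVec_smul,
        Matrix.mulVec_smul, Matrix.mulVec_single, Matrix.mulVec_single]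
      funext i
      by_cases h : i = ρfun s
      · subst h
        simp only [Pi.sub_apply, Pi.smul_apply, smul_eq_mul, Pi.zero_apply, mul_one,
          MulOpposite.op_one, one_smul, Matrix.col_apply]
        ring
      · have his : M i s = 0 := by
          by_contra hns
          exact h (huniq s i hns)
        have his' : M i s' = 0 := by
          by_contra hns
          exact h ((huniq s' i hns).trans hss.symm)
        simp [his, his']
    have hx0 := hMinj hx
    have hxs := congrFun hx0 s
    rw [hxdef] at hxs
    simp [Pi.single_apply, hne] at hxs
    exact h2 hxs
  have hρbij : Function.Bijective ρfun := Finite.injective_iff_bijective.mp hρinj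
  set σ : Equiv.Perm (Fin d) := (Equiv.ofBijective ρfun hρbij).symm with hσdef
  have hρσ : ∀ k, ρfun (σ k) = k := fun k =>
    (Equiv.ofBijective ρfun hρbij).apply_symm_apply k
  have hσρ : ∀ s, σ (ρfun s) = s := fun s =>
    (Equiv.ofBijective ρfun hρbij).symm_apply_apply s
  set Λ : Fin d → ℝ := fun k => M k (σ k) with hΛdef
  have hΛ : ∀ k, Λ k ≠ 0 := by
    intro k
    have h := hρfun (σ k)
    rw [hρσ k] at h
    simpa only [hΛdef] using h
  refine ⟨Λ, σ, c0, hΛ, ?_⟩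
  intro z hz
  have hw : f (G.mulVec (phi d p z)) = w z := rfl
  rw [hw, key4 z hz]
  have hMz : M.mulVec z = (Matrix.diagonal Λ).mulVec (fun r => z (σ r)) := by
    funext k
    rw [Matrix.mulVec_diagonal]
    have h1 : (M.mulVec z) k = ∑ j, M k j * z j := by
      simp [Matrix.mulVec, dotProduct]
    have h2 : ∑ j, M k j * z j = M k (σ k) * z (σ k) := by
      refine Finset.sum_eq_single (σ k) (fun j _ hj => ?_) (fun h => absurd (Finset.mem_univ _) h)
      have hzero : M k j = 0 := by
        by_contra hne
        have hkj := huniq j k hne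
        exact hj (by rw [hkj, hσρ])
      rw [hzero, zero_mul]
    rw [h1, h2]
  rw [hMz]
end

section
/- Let a, b ∈ ℝ^d with a₁ > 0 and b₁ > 0, and let ε satisfy 0 < ε < 1/(1/a₁ + 1/b₁). Then there is no z ∈ [−1,1]^d such that both aᵀz < −‖a‖₁ + ε and bᵀz > ‖b‖₁ − ε hold, where ‖·‖₁ denotes the ℓ₁ norm. -/
/-- **incompatibility of simultaneous near-extremes.**  If `a` and `b`
both have positive first coordinate and `0 < ε < 1/(1/a₁ + 1/b₁)`, then no `z` in the
cube `[−1,1]^d` satisfies both `aᵀz < −‖a‖₁ + ε` and `bᵀz > ‖b‖₁ − ε`. -/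
theorem no_simultaneous_near_extremes
    (d : ℕ) (hd : 0 < d) (a b : Fin d → ℝ)
    (ha : 0 < a ⟨0, hd⟩) (hb : 0 < b ⟨0, hd⟩)
    (ε : ℝ) (hε : 0 < ε)
    (hε' : ε < 1 / (1 / a ⟨0, hd⟩ + 1 / b ⟨0, hd⟩)) :
    ¬ ∃ z : Fin d → ℝ, (∀ k, z k ∈ Set.Icc (-1 : ℝ) 1) ∧
      (∑ k, a k * z k) < -(∑ k, |a k|) + ε ∧
      (∑ k, b k * z k) > (∑ k, |b k|) - ε := by
  rintro ⟨z, hz, hA, hB⟩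
  set i0 : Fin d := ⟨0, hd⟩
  have habs : ∀ k, |z k| ≤ 1 := by
    intro k
    rcases hz k with ⟨h1, h2⟩
    exact abs_le.mpr ⟨h1, h2⟩
  have hbound : ∀ (c : Fin d → ℝ) (k : Fin d), -|c k| ≤ c k * z k ∧ c k * z k ≤ |c k| := by
    intro c k
    constructor
    · calc -|c k| = -(|c k| * 1) := by ring
        _ ≤ -(|c k| * |z k|) := by
            nlinarith [abs_nonneg (c k), habs k, abs_nonneg (z k)]
        _ = -|c k * z k| := by rw [abs_mul]
        _ ≤ c k * z k := neg_abs_le _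
    · calc c k * z k ≤ |c k * z k| := le_abs_self _
        _ = |c k| * |z k| := abs_mul _ _
        _ ≤ |c k| * 1 := by nlinarith [abs_nonneg (c k), habs k]
        _ = |c k| := by ring
  -- lower bound for a-sum
  have hAsum : a i0 * z i0 - ∑ k, |a k| + |a i0| ≤ ∑ k, a k * z k := by
    have h1 : ∑ k ∈ Finset.univ.erase i0, (-|a k|) ≤ ∑ k ∈ Finset.univ.erase i0, a k * z k :=
      Finset.sum_le_sum fun k _ => (hbound a k).1
    have h2 : ∑ k, a k * z k = a i0 * z i0 + ∑ k ∈ Finset.univ.erase i0, a k * z k :=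
      (Finset.add_sum_erase _ _ (Finset.mem_univ i0)).symm
    have h3 : ∑ k, |a k| = |a i0| + ∑ k ∈ Finset.univ.erase i0, |a k| :=
      (Finset.add_sum_erase _ _ (Finset.mem_univ i0)).symm
    have h4 : ∑ k ∈ Finset.univ.erase i0, (-|a k|) = -∑ k ∈ Finset.univ.erase i0, |a k| := by
      simp [Finset.sum_neg_distrib]
    linarith
  have hBsum : ∑ k, b k * z k ≤ b i0 * z i0 + ∑ k, |b k| - |b i0| := by
    have h1 : ∑ k ∈ Finset.univ.erase i0, b k * z k ≤ ∑ k ∈ Finset.univ.erase i0, |b k| :=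
      Finset.sum_le_sum fun k _ => (hbound b k).2
    have h2 : ∑ k, b k * z k = b i0 * z i0 + ∑ k ∈ Finset.univ.erase i0, b k * z k :=
      (Finset.add_sum_erase _ _ (Finset.mem_univ i0)).symm
    have h3 : ∑ k, |b k| = |b i0| + ∑ k ∈ Finset.univ.erase i0, |b k| :=
      (Finset.add_sum_erase _ _ (Finset.mem_univ i0)).symm
    linarith
  have haa : |a i0| = a i0 := abs_of_pos ha
  have hbb : |b i0| = b i0 := abs_of_pos hb
  -- a i0 * (z i0 + 1) < ε, b i0 * (1 - z i0) < ε
  have hA' : a i0 * (z i0 + 1) < ε := by rw [haa] at hAsum; nlinarith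
  have hB' : b i0 * (1 - z i0) < ε := by rw [hbb] at hBsum; nlinarith
  have h1 : z i0 + 1 < ε / a i0 := by
    rw [lt_div_iff₀ ha]; nlinarith
  have h2 : 1 - z i0 < ε / b i0 := by
    rw [lt_div_iff₀ hb]; nlinarith
  have hs : 0 < 1 / a i0 + 1 / b i0 := by positivity
  have : ε * (1 / a i0 + 1 / b i0) < 1 := by
    rw [lt_div_iff₀ hs] at hε'; linarith
  have hsum : 2 < ε / a i0 + ε / b i0 := by linarith
  have : ε / a i0 + ε / b i0 = ε * (1 / a i0 + 1 / b i0) := by ring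
  linarith
end
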